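/- arXiv:1902.04195 — 5 statements merged into one kernel-verified Lean document; each statement's English description precedes it below -/
import Mathlib

section
/- Let W be an n×n real symmetric positive definite matrix and τ a real number. Then n·τ − tr(W⁻¹) ≥ 0 holds if and only if there exists an n×n real symmetric matrix P with n·τ − tr(P) ≥ 0 and the block matrix [[W, I_n],[I_n, P]] positive semidefinite. -/
open Matrix

lemma aux_trace_nonneg {n : ℕ} {A : Matrix (Fin n) (Fin n) ℝ} (hA : A.PosSemidef) :
    0 ≤ A.trace := by
  apply Finset.sum_nonneg
  intro i _
  exact hA.diag_nonneg

lemma aux_isSymm {n : ℕ} {A : Matrix (Fin n) (Fin n) ℝ} (hA : A.IsHermitian) :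
    A.IsSymm := by
  ext i j
  have := congrFun (congrFun hA i) j
  simpa [Matrix.conjTranspose_apply, Matrix.IsSymm, Matrix.transpose_apply] using this

/-- For `W ≻ 0`, the trace-inverse condition `n·τ − tr(W⁻¹) ≥ 0` holds iff there exists a
symmetric `P` with `n·τ − tr(P) ≥ 0` and `[[W, I],[I, P]] ⪰ 0`. -/
theorem stmt_6 {n : ℕ} (W : Matrix (Fin n) (Fin n) ℝ) (hW : W.PosDef) (τ : ℝ) :
    (n * τ - (W⁻¹).trace ≥ 0) ↔
      ∃ P : Matrix (Fin n) (Fin n) ℝ, P.IsSymm ∧ n * τ - P.trace ≥ 0 ∧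
        (Matrix.fromBlocks W (1 : Matrix (Fin n) (Fin n) ℝ)
          (1 : Matrix (Fin n) (Fin n) ℝ) P).PosSemidef := by
  haveI : Invertible W := W.invertibleOfIsUnitDet (isUnit_iff_ne_zero.mpr hW.det_pos.ne')
  have key : ∀ P : Matrix (Fin n) (Fin n) ℝ,
      (Matrix.fromBlocks W 1 1 P).PosSemidef ↔ (P - W⁻¹).PosSemidef := by
    intro P
    have := Matrix.PosDef.fromBlocks₁₁ (A := W)
      (1 : Matrix (Fin n) (Fin n) ℝ) P hW
    simpa using this
  constructor
  · intro h
    refine ⟨W⁻¹, aux_isSymm hW.isHermitian.inv, h, ?_⟩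
    rw [key]
    simpa using Matrix.PosSemidef.zero
  · rintro ⟨P, -, hτ, hpsd⟩
    rw [key] at hpsd
    have := aux_trace_nonneg hpsd
    rw [Matrix.trace_sub] at this
    linarith
end

section
/- Let X ∈ ℝ^{m×n}, let r ≤ min{m,n}, and let L ∈ ℝ^{r×m}, R ∈ ℝ^{r×n} satisfy LLᵀ = I_r and RRᵀ = I_r. Then tr(L X Rᵀ) ≤ σ₁(X) + σ₂(X) + ⋯ + σ_r(X), the sum of the r largest singular values of X (Von Neumann's trace inequality for partial isometries). -/
open Matrix




/-- The singular values of a real matrix `X` (square roots of the eigenvalues of `XᴴX`),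
arranged in decreasing order, as a function `ℕ → ℝ` which is `0` from the number of
columns onwards. -/
noncomputable def svals {I J : Type*} [Fintype I] [Fintype J] [DecidableEq J]
    (X : Matrix I J ℝ) : ℕ → ℝ := fun i =>
  let f : Fin (Fintype.card J) → ℝ := fun j =>
    Real.sqrt ((Matrix.isHermitian_conjTranspose_mul_self X).eigenvalues
      ((Fintype.equivFin J).symm j))
  if h : i < Fintype.card J then f (Tuple.sort f (Fin.rev ⟨i, h⟩)) else 0

namespace VN

lemma dot_self_nonneg {k : ℕ} (v : Fin k → ℝ) : 0 ≤ v ⬝ᵥ v :=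
  Finset.sum_nonneg fun i _ => mul_self_nonneg _

lemma dot_cs {k : ℕ} (v w : Fin k → ℝ) : (v ⬝ᵥ w)^2 ≤ (v ⬝ᵥ v) * (w ⬝ᵥ w) := by
  simpa [dotProduct, sq] using Finset.sum_mul_sq_le_sq_mul_sq Finset.univ v w

lemma dot_amgm {k : ℕ} (x y : Fin k → ℝ) : x ⬝ᵥ y ≤ (x ⬝ᵥ x + y ⬝ᵥ y) / 2 := by
  have h := dot_self_nonneg (x - y)
  have e : (x - y) ⬝ᵥ (x - y) = x ⬝ᵥ x - 2 * (x ⬝ᵥ y) + y ⬝ᵥ y := by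
    simp [sub_dotProduct, dotProduct_sub, dotProduct_comm y x]
    ring
  linarith [e ▸ h]

lemma dot_mulVec_self {k l : ℕ} (M : Matrix (Fin k) (Fin l) ℝ) (x : Fin l → ℝ) :
    (M *ᵥ x) ⬝ᵥ (M *ᵥ x) = x ⬝ᵥ ((Mᵀ * M) *ᵥ x) := by
  rw [← Matrix.mulVec_mulVec, Matrix.dotProduct_mulVec x, Matrix.vecMul_transpose]

lemma dot_contract {r k : ℕ} (L : Matrix (Fin r) (Fin k) ℝ) (hL : L * Lᵀ = 1)
    (y : Fin k → ℝ) : (L *ᵥ y) ⬝ᵥ (L *ᵥ y) ≤ y ⬝ᵥ y := by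
  set w := L *ᵥ y with hw
  set z := Lᵀ *ᵥ w with hz
  have hzz : z ⬝ᵥ z = w ⬝ᵥ w := by
    rw [hz, dot_mulVec_self, Matrix.transpose_transpose, hL, Matrix.one_mulVec]
  have hzy : z ⬝ᵥ y = w ⬝ᵥ w := by
    rw [hz, dotProduct_comm, Matrix.dotProduct_mulVec y, Matrix.vecMul_transpose, ← hw]
  have hcs := dot_cs z y
  rw [hzy, hzz] at hcs
  have h0 : 0 ≤ w ⬝ᵥ w := dot_self_nonneg w
  have h0y : 0 ≤ y ⬝ᵥ y := dot_self_nonneg y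
  nlinarith [hcs, h0, h0y]

lemma trace_mul_transpose_nonneg {k l : ℕ} (M : Matrix (Fin k) (Fin l) ℝ) :
    0 ≤ (M * Mᵀ).trace := by
  simp only [Matrix.trace, Matrix.diag, Matrix.mul_apply, Matrix.transpose_apply]
  exact Finset.sum_nonneg fun i _ => Finset.sum_nonneg fun j _ => mul_self_nonneg _

/-- The `f` inside `svals`. -/
noncomputable def svF {I J : Type*} [Fintype I] [Fintype J] [DecidableEq J]
    (X : Matrix I J ℝ) : Fin (Fintype.card J) → ℝ := fun j =>
  Real.sqrt ((Matrix.isHermitian_conjTranspose_mul_self X).eigenvalues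
    ((Fintype.equivFin J).symm j))

end VN

namespace VN

variable {I J : Type*} [Fintype I] [Fintype J] [DecidableEq J] (X : Matrix I J ℝ)

lemma svals_eq_dite (i : ℕ) :
    svals X i = if h : i < Fintype.card J then
      svF X (Tuple.sort (svF X) (Fin.rev ⟨i, h⟩)) else 0 := rfl

lemma svF_nonneg (j) : 0 ≤ svF X j := Real.sqrt_nonneg _

lemma svals_nonneg (i : ℕ) : 0 ≤ svals X i := by
  rw [svals_eq_dite]; split
  · exact svF_nonneg X _
  · exact le_refl 0

lemma svals_antitone : Antitone (svals X) := by
  intro i j hij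
  rw [svals_eq_dite, svals_eq_dite]
  by_cases hj : j < Fintype.card J
  · have hi : i < Fintype.card J := lt_of_le_of_lt hij hj
    rw [dif_pos hj, dif_pos hi]
    exact Tuple.monotone_sort (svF X) (Fin.rev_le_rev.2 (by exact hij))
  · rw [dif_neg hj]
    split
    · exact svF_nonneg X _
    · exact le_refl 0

lemma svals_sum (φ : ℝ → ℝ) :
    ∑ j : J, φ (Real.sqrt ((Matrix.isHermitian_conjTranspose_mul_self X).eigenvalues j))
      = ∑ i ∈ Finset.range (Fintype.card J), φ (svals X i) := by
  rw [← Fin.sum_univ_eq_sum_range]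
  have h1 : ∀ i : Fin (Fintype.card J),
      φ (svals X i.val) = (φ ∘ svF X) ((Fin.revPerm.trans (Tuple.sort (svF X))) i) := by
    intro i
    rw [svals_eq_dite, dif_pos i.isLt]
    simp
  rw [Finset.sum_congr rfl fun i _ => h1 i, Equiv.sum_comp]
  exact (Equiv.sum_comp (Fintype.equivFin J).symm
    (fun j => φ (Real.sqrt ((Matrix.isHermitian_conjTranspose_mul_self X).eigenvalues j)))).symm

end VN

open VN

set_option maxHeartbeats 2000000 in
/-- Von Neumann's trace inequality for partial isometries: if `L Lᵀ = I_r` and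
`R Rᵀ = I_r`, then `tr(L X Rᵀ) ≤ σ₁(X) + ⋯ + σ_r(X)`. -/
theorem stmt_8 {m n r : ℕ} (hr : r ≤ min m n) (X : Matrix (Fin m) (Fin n) ℝ)
    (L : Matrix (Fin r) (Fin m) ℝ) (R : Matrix (Fin r) (Fin n) ℝ)
    (hL : L * Lᵀ = 1) (hR : R * Rᵀ = 1) :
    (L * X * Rᵀ).trace ≤ ∑ i ∈ Finset.range r, svals X i := by
  classical
  have hrn : r ≤ n := le_trans hr (min_le_right m n)
  set hH : (Xᴴ * X).IsHermitian := Matrix.isHermitian_conjTranspose_mul_self X with hHdef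
  set μ : Fin n → ℝ := hH.eigenvalues with hμdef
  have hμ0 : ∀ j, 0 ≤ μ j := fun j => Matrix.eigenvalues_conjTranspose_mul_self_nonneg X j
  set V : Matrix (Fin n) (Fin n) ℝ := (hH.eigenvectorUnitary : Matrix (Fin n) (Fin n) ℝ) with hVdef
  have hVmem : V ∈ Matrix.unitaryGroup (Fin n) ℝ := hH.eigenvectorUnitary.2
  have hVV : V * Vᵀ = 1 := by
    have := hVmem.2
    simpa [star, Matrix.conjTranspose] using this
  have hVtV : Vᵀ * V = 1 := by
    have := hVmem.1
    simpa [star, Matrix.conjTranspose] using this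
  have hspec : Xᵀ * X = V * Matrix.diagonal μ * Vᵀ := by
    have h := hH.spectral_theorem
    rw [← Matrix.conjTranspose_eq_transpose_of_trivial X]
    refine h.trans ?_
    rw [Unitary.conjStarAlgAut_apply, Matrix.star_eq_conjTranspose,
      Matrix.conjTranspose_eq_transpose_of_trivial (A := V)]
    rfl
  have hdiag : Vᵀ * (Xᵀ * X) * V = Matrix.diagonal μ := by
    rw [hspec]
    simp only [← Matrix.mul_assoc]
    rw [hVtV, one_mul, Matrix.mul_assoc, hVtV, mul_one]
  have hXc : Xᴴ = Xᵀ := by ext i j; simp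
  set v : Fin n → Fin n → ℝ := fun j i => V i j with hvdef
  set w : Fin n → Fin m → ℝ := fun j => X *ᵥ v j with hwdef
  set a : Fin n → Fin r → ℝ := fun j => L *ᵥ w j with hadef
  set b : Fin n → Fin r → ℝ := fun j => R *ᵥ v j with hbdef
  set σ : Fin n → ℝ := fun j => Real.sqrt (μ j) with hσdef
  have hvv : ∀ j, v j ⬝ᵥ v j = 1 := by
    intro j
    have h := congrFun (congrFun hVtV j) j
    simpa [Matrix.mul_apply, Matrix.one_apply, dotProduct] using h
  have hsingle : ∀ j, Vᵀ *ᵥ v j = Pi.single j 1 := by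
    intro j; funext i
    have h := congrFun (congrFun hVtV i) j
    simp only [Matrix.mul_apply, Matrix.transpose_apply] at h
    simp only [Matrix.mulVec, dotProduct, Matrix.transpose_apply]
    rw [h, Matrix.one_apply, Pi.single_apply]
  have heig : ∀ j, (Xᵀ * X) *ᵥ v j = μ j • v j := by
    intro j
    rw [hspec, ← Matrix.mulVec_mulVec, ← Matrix.mulVec_mulVec, hsingle j,
      Matrix.diagonal_mulVec_single]
    funext i
    simp only [Matrix.mulVec_single, Pi.smul_apply, smul_eq_mul, op_smul_eq_mul, Matrix.col_apply]
    ring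
  have hww : ∀ j, w j ⬝ᵥ w j = μ j := by
    intro j
    rw [hwdef]
    rw [dot_mulVec_self, heig j, dotProduct_smul, hvv j, smul_eq_mul, mul_one]
  have htr : (L * X * Rᵀ).trace = ∑ j, a j ⬝ᵥ b j := by
    have h1 : L * X * Rᵀ = (L * X * V) * (R * V)ᵀ := by
      rw [Matrix.transpose_mul]
      calc L * X * Rᵀ = L * X * (V * Vᵀ) * Rᵀ := by rw [hVV, Matrix.mul_one]
        _ = L * X * V * (Vᵀ * Rᵀ) := by simp only [Matrix.mul_assoc]
    have hA : ∀ (i : Fin r) (jj : Fin n), (L * X * V) i jj = a jj i := by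
      intro i jj
      have h2 : (L * X * V) i jj = ((L * X) *ᵥ v jj) i := rfl
      rw [h2, ← Matrix.mulVec_mulVec]
    have hB : ∀ (i : Fin r) (jj : Fin n), (R * V) i jj = b jj i := fun i jj => rfl
    rw [h1]
    have hjj : ∀ j, a j ⬝ᵥ b j = ∑ i, (L * X * V) i j * (R * V) i j := by
      intro j
      simp only [dotProduct]
      exact Finset.sum_congr rfl fun i _ => by rw [hA i j, hB i j]
    rw [Finset.sum_congr rfl fun j (_ : j ∈ Finset.univ) => hjj j]
    simp only [Matrix.trace, Matrix.diag, Matrix.mul_apply, Matrix.transpose_apply]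
    exact Finset.sum_comm
  set u : Fin n → Fin m → ℝ := fun j => (σ j)⁻¹ • w j with hudef
  set Lu : Fin n → Fin r → ℝ := fun j => L *ᵥ u j with hLudef
  set c : Fin n → ℝ := fun j => if μ j = 0 then 0 else (Lu j ⬝ᵥ Lu j + b j ⬝ᵥ b j) / 2
    with hcdef
  have hσ0 : ∀ j, 0 ≤ σ j := fun j => Real.sqrt_nonneg _
  have hσsq : ∀ j, σ j * σ j = μ j := fun j => Real.mul_self_sqrt (hμ0 j)
  have hσne : ∀ j, μ j ≠ 0 → σ j ≠ 0 := by
    intro j hj h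
    exact hj (by rw [← hσsq j, h, mul_zero])
  have hwu : ∀ j, μ j ≠ 0 → w j = σ j • u j := by
    intro j hj
    rw [hudef]
    simp only [smul_smul, mul_inv_cancel₀ (hσne j hj), one_smul]
  have haLu : ∀ j, μ j ≠ 0 → a j = σ j • Lu j := by
    intro j hj
    calc a j = L *ᵥ w j := rfl
      _ = L *ᵥ (σ j • u j) := by rw [← hwu j hj]
      _ = σ j • (L *ᵥ u j) := Matrix.mulVec_smul _ _ _
  have hab : ∀ j, a j ⬝ᵥ b j ≤ σ j * c j := by
    intro j
    by_cases hj : μ j = 0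
    · simp only [hcdef, if_pos hj, mul_zero]
      have haa : a j ⬝ᵥ a j ≤ 0 := by
        have h := dot_contract L hL (w j)
        rw [hww j, hj] at h
        exact h
      have hcs := dot_cs (a j) (b j)
      nlinarith [dot_self_nonneg (a j), dot_self_nonneg (b j), sq_nonneg (a j ⬝ᵥ b j)]
    · simp only [hcdef, if_neg hj]
      rw [haLu j hj, smul_dotProduct, smul_eq_mul]
      exact mul_le_mul_of_nonneg_left (dot_amgm (Lu j) (b j)) (hσ0 j)
  have hc0 : ∀ j, 0 ≤ c j := by
    intro j
    by_cases hj : μ j = 0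
    · simp [hcdef, hj]
    · simp only [hcdef, if_neg hj]
      have := dot_self_nonneg (Lu j)
      have := dot_self_nonneg (b j)
      linarith
  have hc1 : ∀ j, c j ≤ 1 := by
    intro j
    by_cases hj : μ j = 0
    · simp [hcdef, hj]
    · have huu : u j ⬝ᵥ u j = 1 := by
        rw [hudef]
        simp only [smul_dotProduct, dotProduct_smul, smul_eq_mul, hww j]
        rw [← hσsq j]
        field_simp [hσne j hj]
      have h1 : Lu j ⬝ᵥ Lu j ≤ 1 := le_of_le_of_eq (dot_contract L hL (u j)) huu
      have h2 : b j ⬝ᵥ b j ≤ 1 := le_of_le_of_eq (dot_contract R hR (v j)) (hvv j)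
      simp only [hcdef, if_neg hj]
      linarith
  have hsumb : ∑ j, b j ⬝ᵥ b j = (r : ℝ) := by
    have hB : ∀ (i : Fin r) (jj : Fin n), (R * V) i jj = b jj i := fun i jj => rfl
    have e2 : (R * V) * (R * V)ᵀ = 1 := by
      rw [Matrix.transpose_mul]
      calc R * V * (Vᵀ * Rᵀ) = R * (V * Vᵀ) * Rᵀ := by simp only [Matrix.mul_assoc]
        _ = 1 := by rw [hVV, Matrix.mul_one, hR]
    have e1 : ((R * V) * (R * V)ᵀ).trace = ∑ j, b j ⬝ᵥ b j := by
      have hjj : ∀ j, b j ⬝ᵥ b j = ∑ i, (R * V) i j * (R * V) i j := by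
        intro j
        simp only [dotProduct]
        exact Finset.sum_congr rfl fun i _ => by rw [hB i j]
      rw [Finset.sum_congr rfl fun j (_ : j ∈ Finset.univ) => hjj j]
      simp only [Matrix.trace, Matrix.diag, Matrix.mul_apply, Matrix.transpose_apply]
      exact Finset.sum_comm
    rw [← e1, e2, Matrix.trace_one]
    simp
  set d : Fin n → ℝ := fun j => if μ j = 0 then 0 else (μ j)⁻¹ with hddef
  set P : Matrix (Fin m) (Fin m) ℝ := X * V * Matrix.diagonal d * Vᵀ * Xᵀ with hPdef
  have hPt : Pᵀ = P := by
    rw [hPdef]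
    simp only [Matrix.transpose_mul, Matrix.diagonal_transpose, Matrix.transpose_transpose,
      Matrix.mul_assoc]
  have hDμD : Matrix.diagonal d * Matrix.diagonal μ * Matrix.diagonal d
      = Matrix.diagonal d := by
    rw [Matrix.diagonal_mul_diagonal, Matrix.diagonal_mul_diagonal]
    refine congrArg Matrix.diagonal (funext fun j => ?_)
    by_cases hj : μ j = 0
    · simp [hddef, hj]
    · simp only [hddef, if_neg hj]
      field_simp
  have hcol : ∀ {k : ℕ} (Z : Matrix (Fin n) (Fin k) ℝ),
      Vᵀ * (Xᵀ * (X * (V * Z))) = Matrix.diagonal μ * Z := by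
    intro k Z
    rw [← hdiag]
    simp only [Matrix.mul_assoc]
  have hDD : ∀ {k : ℕ} (Z : Matrix (Fin n) (Fin k) ℝ),
      Matrix.diagonal d * (Matrix.diagonal μ * (Matrix.diagonal d * Z))
        = Matrix.diagonal d * Z := by
    intro k Z
    calc Matrix.diagonal d * (Matrix.diagonal μ * (Matrix.diagonal d * Z))
        = (Matrix.diagonal d * Matrix.diagonal μ * Matrix.diagonal d) * Z := by
          simp only [Matrix.mul_assoc]
      _ = Matrix.diagonal d * Z := by rw [hDμD]
  have hPP : P * P = P := by
    rw [hPdef]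
    simp only [Matrix.mul_assoc]
    rw [hcol, hDD]
  have hA2 : ∀ (i : Fin r) (jj : Fin n), (L * (X * V)) i jj = a jj i :=
    fun i jj => rfl
  have htrP_eq : (L * P * Lᵀ).trace = ∑ j, d j * (a j ⬝ᵥ a j) := by
    have h1 : L * P * Lᵀ = (L * (X * V)) * Matrix.diagonal d * (L * (X * V))ᵀ := by
      rw [hPdef]
      simp only [Matrix.transpose_mul, Matrix.mul_assoc]
    rw [h1]
    have h2 : ∀ i : Fin r,
        ((L * (X * V)) * Matrix.diagonal d * (L * (X * V))ᵀ) i i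
          = ∑ k, d k * (a k i * a k i) := by
      intro i
      rw [Matrix.mul_apply]
      refine Finset.sum_congr rfl fun k _ => ?_
      rw [Matrix.mul_diagonal, Matrix.transpose_apply, hA2]
      ring
    simp only [Matrix.trace, Matrix.diag]
    rw [Finset.sum_congr rfl fun i (_ : i ∈ Finset.univ) => h2 i, Finset.sum_comm]
    refine Finset.sum_congr rfl fun j _ => ?_
    simp [dotProduct, Finset.mul_sum]
  have htrP_val : ∑ j, d j * (a j ⬝ᵥ a j)
      = ∑ j, (if μ j = 0 then 0 else Lu j ⬝ᵥ Lu j) := by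
    refine Finset.sum_congr rfl fun j _ => ?_
    by_cases hj : μ j = 0
    · simp [hddef, hj]
    · rw [haLu j hj, smul_dotProduct, dotProduct_smul, smul_eq_mul, smul_eq_mul]
      simp only [hddef, if_neg hj]
      rw [← mul_assoc (σ j), hσsq j, inv_mul_cancel_left₀ hj]
  have htrP_le : (L * P * Lᵀ).trace ≤ (r : ℝ) := by
    have h2 : (1 - P)ᵀ = 1 - P := by rw [Matrix.transpose_sub, Matrix.transpose_one, hPt]
    have h3 : (1 - P) * (1 - P) = 1 - P := by
      rw [Matrix.sub_mul, Matrix.mul_sub, Matrix.mul_sub, hPP]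
      simp
    have h1 : ((L * (1 - P)) * (L * (1 - P))ᵀ).trace
        = (L * Lᵀ).trace - (L * P * Lᵀ).trace := by
      have e : (L * (1 - P)) * (L * (1 - P))ᵀ = L * (1 - P) * Lᵀ := by
        calc (L * (1 - P)) * (L * (1 - P))ᵀ = L * ((1 - P) * ((1 - P)ᵀ * Lᵀ)) := by
              simp only [Matrix.transpose_mul, Matrix.mul_assoc]
          _ = L * (((1 - P) * (1 - P)) * Lᵀ) := by rw [h2, Matrix.mul_assoc]
          _ = L * (1 - P) * Lᵀ := by rw [h3, Matrix.mul_assoc]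
      rw [e, Matrix.mul_sub, Matrix.mul_one, Matrix.sub_mul, Matrix.trace_sub]
    have h4 := trace_mul_transpose_nonneg (L * (1 - P))
    rw [h1] at h4
    have h5 : (L * Lᵀ).trace = (r : ℝ) := by rw [hL, Matrix.trace_one]; simp
    linarith
  have hsumLu : ∑ j, (if μ j = 0 then 0 else Lu j ⬝ᵥ Lu j) ≤ (r : ℝ) := by
    rw [← htrP_val, ← htrP_eq]
    exact htrP_le
  have hsumc : ∑ j, c j ≤ (r : ℝ) := by
    have hpt : ∀ j, c j ≤ ((if μ j = 0 then 0 else Lu j ⬝ᵥ Lu j) + b j ⬝ᵥ b j) / 2 := by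
      intro j
      by_cases hj : μ j = 0
      · simp only [hcdef, if_pos hj]
        have := dot_self_nonneg (b j)
        linarith
      · simp only [hcdef, if_neg hj]
        exact le_refl _
    calc ∑ j, c j ≤ ∑ j, ((if μ j = 0 then 0 else Lu j ⬝ᵥ Lu j) + b j ⬝ᵥ b j) / 2 :=
          Finset.sum_le_sum fun j _ => hpt j
      _ = ((∑ j, (if μ j = 0 then 0 else Lu j ⬝ᵥ Lu j)) + ∑ j, b j ⬝ᵥ b j) / 2 := by
          rw [← Finset.sum_div, Finset.sum_add_distrib]
      _ ≤ ((r : ℝ) + (r : ℝ)) / 2 := by rw [hsumb]; linarith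
      _ = (r : ℝ) := by ring
  have hstep1 : (L * X * Rᵀ).trace ≤ ∑ j, σ j * c j := by
    rw [htr]; exact Finset.sum_le_sum fun j _ => hab j
  obtain ⟨t, htdef⟩ : ∃ t : ℝ, t = svals X r := ⟨_, rfl⟩
  have ht0 : 0 ≤ t := htdef ▸ svals_nonneg X r
  have hNr : r ≤ Fintype.card (Fin n) := by rw [Fintype.card_fin]; exact hrn
  have hstep2 : ∑ j, σ j * c j ≤ (∑ j, max (σ j - t) 0) + t * (r : ℝ) := by
    have hpt2 : ∀ j, σ j * c j ≤ max (σ j - t) 0 + t * c j := by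
      intro j
      rcases le_or_gt t (σ j) with h | h
      · have h1 : (σ j - t) * c j ≤ (σ j - t) * 1 :=
          mul_le_mul_of_nonneg_left (hc1 j) (by linarith)
        have h2 : σ j - t ≤ max (σ j - t) 0 := le_max_left _ _
        nlinarith
      · have h1 : (σ j - t) * c j ≤ 0 := mul_nonpos_iff.2 (Or.inr ⟨by linarith, hc0 j⟩)
        have h2 : (0:ℝ) ≤ max (σ j - t) 0 := le_max_right _ _
        nlinarith
    calc ∑ j, σ j * c j ≤ ∑ j, (max (σ j - t) 0 + t * c j) :=
          Finset.sum_le_sum fun j _ => hpt2 j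
      _ = (∑ j, max (σ j - t) 0) + t * ∑ j, c j := by
          rw [Finset.sum_add_distrib, Finset.mul_sum]
      _ ≤ (∑ j, max (σ j - t) 0) + t * (r : ℝ) :=
          add_le_add_right (mul_le_mul_of_nonneg_left hsumc ht0) _
  have hre : (∑ j, max (σ j - t) 0)
      = ∑ i ∈ Finset.range (Fintype.card (Fin n)), max (svals X i - t) 0 :=
    svals_sum X (fun z => max (z - t) 0)
  have hmax : ∑ i ∈ Finset.range (Fintype.card (Fin n)), max (svals X i - t) 0
      = ∑ i ∈ Finset.range r, max (svals X i - t) 0 := by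
    refine (Finset.sum_subset (Finset.range_subset_range.2 hNr) ?_).symm
    intro i _ hi
    have h1 : r ≤ i := le_of_not_gt fun h => hi (Finset.mem_range.2 h)
    have h2 : svals X i ≤ t := htdef ▸ svals_antitone X h1
    exact max_eq_right (by linarith)
  have hmax2 : ∑ i ∈ Finset.range r, max (svals X i - t) 0
      = ∑ i ∈ Finset.range r, (svals X i - t) := by
    refine Finset.sum_congr rfl fun i hi => ?_
    have h2 : t ≤ svals X i := htdef ▸ svals_antitone X (le_of_lt (Finset.mem_range.1 hi))
    exact max_eq_left (by linarith)
  calc (L * X * Rᵀ).trace ≤ ∑ j, σ j * c j := hstep1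
    _ ≤ (∑ j, max (σ j - t) 0) + t * (r : ℝ) := hstep2
    _ = (∑ i ∈ Finset.range r, (svals X i - t)) + t * (r : ℝ) := by
        rw [hre, hmax, hmax2]
    _ = ∑ i ∈ Finset.range r, svals X i := by
        rw [Finset.sum_sub_distrib, Finset.sum_const, Finset.card_range, nsmul_eq_mul]
        ring
end

section
/- For X ∈ ℝ^{m×n} and integer r < min{m,n}, the truncated nuclear norm ‖X‖_{∗,r} := Σ_{i=r+1}^{min{m,n}} σ_i(X) satisfies ‖X‖_{∗,r} = ‖X‖_∗ − sup{ tr(L X Rᵀ) : L ∈ ℝ^{r×m}, R ∈ ℝ^{r×n}, LLᵀ = I_r, RRᵀ = I_r }, where ‖X‖_∗ = Σ_i σ_i(X) is the nuclear norm. -/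
open Matrix

lemma dot_amgm {k : ℕ} (a b : Fin k → ℝ) : a ⬝ᵥ b ≤ (a ⬝ᵥ a + b ⬝ᵥ b) / 2 := by
  have h : 0 ≤ (a - b) ⬝ᵥ (a - b) := by
    simp only [dotProduct, Pi.sub_apply]
    exact Finset.sum_nonneg fun i _ => mul_self_nonneg _
  simp only [dotProduct_sub, sub_dotProduct] at h
  rw [dotProduct_comm b a] at h
  linarith

lemma dotProduct_sum' {k l : ℕ} (x : Fin k → ℝ) (g : Fin l → Fin k → ℝ) :
    x ⬝ᵥ (∑ j, g j) = ∑ j, x ⬝ᵥ g j := by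
  simp only [dotProduct, Finset.sum_apply, Finset.mul_sum]
  exact Finset.sum_comm

lemma sum_dotProduct' {k l : ℕ} (x : Fin k → ℝ) (g : Fin l → Fin k → ℝ) :
    (∑ j, g j) ⬝ᵥ x = ∑ j, g j ⬝ᵥ x := by
  rw [dotProduct_comm, dotProduct_sum']
  exact Finset.sum_congr rfl fun j _ => dotProduct_comm _ _

lemma dot_self_nonneg {k : ℕ} (a : Fin k → ℝ) : 0 ≤ a ⬝ᵥ a :=
  Finset.sum_nonneg fun i _ => mul_self_nonneg _

lemma contraction {r m : ℕ} {L : Matrix (Fin r) (Fin m) ℝ} (hL : L * Lᵀ = 1)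
    (a : Fin m → ℝ) : (L *ᵥ a) ⬝ᵥ (L *ᵥ a) ≤ a ⬝ᵥ a := by
  set z := L *ᵥ a with hz
  have h1 : (Lᵀ *ᵥ z) ⬝ᵥ (Lᵀ *ᵥ z) = z ⬝ᵥ z := by
    rw [dotProduct_mulVec, vecMul_transpose, mulVec_mulVec, hL, one_mulVec]
  have h2 : z ⬝ᵥ z = (Lᵀ *ᵥ z) ⬝ᵥ a := by
    rw [hz, dotProduct_mulVec z L a, ← mulVec_transpose]
  have h3 := dot_amgm (Lᵀ *ᵥ z) a
  rw [h1, ← h2] at h3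
  linarith

lemma bessel {m n : ℕ} (u : Fin n → Fin m → ℝ)
    (horth : ∀ i j, i ≠ j → u i ⬝ᵥ u j = 0) (hnorm : ∀ j, u j ⬝ᵥ u j ≤ 1)
    (x : Fin m → ℝ) : ∑ j, (x ⬝ᵥ u j) ^ 2 ≤ x ⬝ᵥ x := by
  set c : Fin n → ℝ := fun j => x ⬝ᵥ u j with hc
  set S : Fin m → ℝ := ∑ j, c j • u j with hS
  have hxS : x ⬝ᵥ S = ∑ j, c j ^ 2 := by
    rw [hS, dotProduct_sum']
    exact Finset.sum_congr rfl fun j _ => by rw [dotProduct_smul, smul_eq_mul, sq]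
  have hSx : S ⬝ᵥ x = ∑ j, c j ^ 2 := by rw [dotProduct_comm]; exact hxS
  have hSS : S ⬝ᵥ S = ∑ j, c j ^ 2 * (u j ⬝ᵥ u j) := by
    rw [hS, sum_dotProduct']
    refine Finset.sum_congr rfl fun j _ => ?_
    rw [smul_dotProduct, dotProduct_sum', smul_eq_mul]
    rw [Finset.sum_eq_single j]
    · rw [dotProduct_smul, smul_eq_mul]; ring
    · intro j' _ hj'; rw [dotProduct_smul, horth j j' (Ne.symm hj'), smul_eq_mul, mul_zero]
    · intro h; exact absurd (Finset.mem_univ j) h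
  have h0 : 0 ≤ (x - S) ⬝ᵥ (x - S) := dot_self_nonneg _
  simp only [dotProduct_sub, sub_dotProduct] at h0
  rw [hxS, hSx, hSS] at h0
  have hb : ∑ j, c j ^ 2 * (u j ⬝ᵥ u j) ≤ ∑ j, c j ^ 2 := by
    refine Finset.sum_le_sum fun j _ => ?_
    calc c j ^ 2 * (u j ⬝ᵥ u j) ≤ c j ^ 2 * 1 := by
          exact mul_le_mul_of_nonneg_left (hnorm j) (sq_nonneg _)
      _ = c j ^ 2 := mul_one _
  calc ∑ j, (x ⬝ᵥ u j) ^ 2 = ∑ j, c j ^ 2 := rfl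
    _ ≤ x ⬝ᵥ x := by linarith
section Spectral
variable {m n : ℕ} (X : Matrix (Fin m) (Fin n) ℝ)

noncomputable def evec (j : Fin n) : Fin n → ℝ :=
  ⇑((Matrix.isHermitian_conjTranspose_mul_self X).eigenvectorBasis j)

noncomputable def sv (j : Fin n) : ℝ :=
  Real.sqrt ((Matrix.isHermitian_conjTranspose_mul_self X).eigenvalues j)

noncomputable def uvec (j : Fin n) : Fin m → ℝ :=
  if sv X j = 0 then 0 else (sv X j)⁻¹ • (X *ᵥ evec X j)

lemma sv_nonneg (j : Fin n) : 0 ≤ sv X j := Real.sqrt_nonneg _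

lemma sv_sq (j : Fin n) :
    sv X j ^ 2 = (Matrix.isHermitian_conjTranspose_mul_self X).eigenvalues j :=
  Real.sq_sqrt (Matrix.eigenvalues_conjTranspose_mul_self_nonneg X j)

lemma vortho (i j : Fin n) : evec X i ⬝ᵥ evec X j = if i = j then 1 else 0 := by
  have h := orthonormal_iff_ite.mp
    ((Matrix.isHermitian_conjTranspose_mul_self X).eigenvectorBasis).orthonormal i j
  rw [PiLp.inner_apply] at h
  simpa [evec, dotProduct, mul_comm] using h

lemma Xv_eigen (j : Fin n) :
    Xᵀ *ᵥ (X *ᵥ evec X j) =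
      ((Matrix.isHermitian_conjTranspose_mul_self X).eigenvalues j) • evec X j := by
  have h := (Matrix.isHermitian_conjTranspose_mul_self X).mulVec_eigenvectorBasis j
  rw [mulVec_mulVec]
  have hct : Xᴴ = Xᵀ := Matrix.conjTranspose_eq_transpose_of_trivial X
  rw [← hct]
  exact h

lemma Xv_dot (i j : Fin n) :
    (X *ᵥ evec X i) ⬝ᵥ (X *ᵥ evec X j) = (if i = j then 1 else 0) * sv X j ^ 2 := by
  have h1 : (X *ᵥ evec X i) ⬝ᵥ (X *ᵥ evec X j) = evec X i ⬝ᵥ (Xᵀ *ᵥ (X *ᵥ evec X j)) := by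
    rw [dotProduct_comm, dotProduct_mulVec, ← mulVec_transpose, dotProduct_comm]
  rw [h1, Xv_eigen, dotProduct_smul, smul_eq_mul, vortho, sv_sq]
  ring

lemma Xv_eq (j : Fin n) : X *ᵥ evec X j = sv X j • uvec X j := by
  rw [uvec]
  split_ifs with h
  · have h0 : (X *ᵥ evec X j) ⬝ᵥ (X *ᵥ evec X j) = 0 := by
      rw [Xv_dot, if_pos rfl, h]; ring
    have : X *ᵥ evec X j = 0 := dotProduct_self_eq_zero.mp h0
    rw [this, smul_zero]
  · rw [smul_smul, mul_inv_cancel₀ h, one_smul]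

lemma u_dot (i j : Fin n) : uvec X i ⬝ᵥ uvec X j =
    if i = j then (if sv X j = 0 then 0 else 1) else 0 := by
  rw [uvec, uvec]
  rcases eq_or_ne i j with rfl | hij
  · rw [if_pos rfl]
    split_ifs with h
    · simp
    · rw [smul_dotProduct, dotProduct_smul, Xv_dot, if_pos rfl, smul_eq_mul, smul_eq_mul]
      field_simp
  · rw [if_neg hij]
    split_ifs with h1 h2 h3
    · simp
    · simp
    · simp
    · rw [smul_dotProduct, dotProduct_smul, Xv_dot, if_neg hij, smul_eq_mul, smul_eq_mul]
      ring

lemma expand_vec (x : Fin n → ℝ) (i : Fin n) :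
    x i = ∑ j, (evec X j ⬝ᵥ x) * evec X j i := by
  classical
  set V : Matrix (Fin n) (Fin n) ℝ := Matrix.of fun i j => evec X j i with hV
  have hVt : Vᵀ * V = 1 := by
    ext a b
    rw [Matrix.mul_apply, Matrix.one_apply]
    simpa [hV, dotProduct] using vortho X a b
  have hVVt : V * Vᵀ = 1 := mul_eq_one_comm.mp hVt
  have hx : (V * Vᵀ) *ᵥ x = x := by rw [hVVt, Matrix.one_mulVec]
  calc x i = ((V * Vᵀ) *ᵥ x) i := by rw [hx]
    _ = ∑ j, (evec X j ⬝ᵥ x) * evec X j i := by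
        rw [← mulVec_mulVec]
        simp only [Matrix.mulVec, dotProduct, hV, Matrix.transpose_apply, Matrix.of_apply]
        exact Finset.sum_congr rfl fun j _ => mul_comm _ _

lemma Xdecomp : X = ∑ j, sv X j • Matrix.vecMulVec (uvec X j) (evec X j) := by
  ext i j'
  rw [Matrix.sum_apply]
  have h := expand_vec X (fun k => X i k) j'
  rw [h]
  refine Finset.sum_congr rfl fun j _ => ?_
  have h2 : evec X j ⬝ᵥ (fun k => X i k) = (X *ᵥ evec X j) i := by
    rw [dotProduct_comm]; rfl
  rw [h2, Xv_eq]
  simp [Matrix.vecMulVec_apply]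
  ring

end Spectral
section Trace
variable {r m n : ℕ} (X : Matrix (Fin m) (Fin n) ℝ)

lemma trace_vecMulVec_sandwich (L : Matrix (Fin r) (Fin m) ℝ)
    (R : Matrix (Fin r) (Fin n) ℝ) (u : Fin m → ℝ) (v : Fin n → ℝ) :
    (L * Matrix.vecMulVec u v * Rᵀ).trace = (L *ᵥ u) ⬝ᵥ (R *ᵥ v) := by
  simp only [Matrix.trace, Matrix.diag_apply, Matrix.mul_apply, Matrix.vecMulVec_apply,
    Matrix.transpose_apply, Matrix.mulVec, dotProduct, Finset.sum_mul, Finset.mul_sum]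
  refine Finset.sum_congr rfl fun k _ => ?_
  rw [Finset.sum_comm]
  conv_rhs => rw [Finset.sum_comm]
  refine Finset.sum_congr rfl fun i _ => ?_
  refine Finset.sum_congr rfl fun j _ => ?_
  ring

lemma sandwich_diag (L : Matrix (Fin r) (Fin m) ℝ) (R : Matrix (Fin r) (Fin n) ℝ) (k : Fin r) :
    (L * X * Rᵀ) k k = (fun i => L k i) ⬝ᵥ (X *ᵥ fun j => R k j) := by
  simp only [Matrix.mul_apply, Matrix.transpose_apply, Matrix.mulVec, dotProduct,
    Finset.sum_mul, Finset.mul_sum]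
  rw [Finset.sum_comm]
  refine Finset.sum_congr rfl fun i _ => Finset.sum_congr rfl fun j _ => by ring

lemma trace_formula (L : Matrix (Fin r) (Fin m) ℝ) (R : Matrix (Fin r) (Fin n) ℝ) :
    (L * X * Rᵀ).trace = ∑ j, sv X j * ((L *ᵥ uvec X j) ⬝ᵥ (R *ᵥ evec X j)) := by
  conv_lhs => rw [Xdecomp X]
  simp only [Matrix.mul_sum, Matrix.sum_mul, Matrix.trace_sum]
  refine Finset.sum_congr rfl fun j _ => ?_
  rw [Matrix.mul_smul, Matrix.smul_mul, Matrix.trace_smul, trace_vecMulVec_sandwich,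
    smul_eq_mul]

end Trace

section Sorting
variable {m n : ℕ} (X : Matrix (Fin m) (Fin n) ℝ)

noncomputable def fsort : Fin (Fintype.card (Fin n)) → ℝ := fun j =>
  Real.sqrt ((Matrix.isHermitian_conjTranspose_mul_self X).eigenvalues
    ((Fintype.equivFin (Fin n)).symm j))

noncomputable def gperm : Fin n ≃ Fin n :=
  (finCongr (Fintype.card_fin n).symm).trans (Fin.revPerm.trans
    ((Tuple.sort (fsort X)).trans (Fintype.equivFin (Fin n)).symm))

lemma svals_lt (i : ℕ) (h : i < Fintype.card (Fin n)) :
    svals X i = fsort X (Tuple.sort (fsort X) (Fin.rev ⟨i, h⟩)) := by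
  simp only [svals]
  rw [dif_pos h]
  rfl

lemma svals_g (i : Fin n) : svals X (i : ℕ) = sv X (gperm X i) := by
  have h : (i : ℕ) < Fintype.card (Fin n) := by simp
  rw [svals_lt X i h]
  have he : (⟨(i : ℕ), h⟩ : Fin (Fintype.card (Fin n))) = finCongr (Fintype.card_fin n).symm i := by
    ext; simp
  rw [he]
  rfl

lemma svals_nonneg (i : ℕ) : 0 ≤ svals X i := by
  simp only [svals]
  split_ifs
  · exact Real.sqrt_nonneg _
  · exact le_refl 0

lemma svals_anti : Antitone (svals X) := by
  intro i i' hii'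
  by_cases h' : i' < Fintype.card (Fin n)
  · have h : i < Fintype.card (Fin n) := lt_of_le_of_lt hii' h'
    rw [svals_lt X i h, svals_lt X i' h']
    exact Tuple.monotone_sort (fsort X)
      (Fin.rev_le_rev.mpr (by exact hii'))
  · have : svals X i' = 0 := by simp only [svals]; rw [dif_neg h']
    rw [this]
    exact svals_nonneg X i

end Sorting

lemma weight_sum {n r : ℕ} (hrn : r ≤ n) (s w : ℕ → ℝ)
    (hs_anti : Antitone s) (hs0 : ∀ i, 0 ≤ s i)
    (hw0 : ∀ i, 0 ≤ w i) (hw1 : ∀ i, w i ≤ 1)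
    (hwsum : ∑ i ∈ Finset.range n, w i ≤ (r : ℝ)) :
    ∑ i ∈ Finset.range n, s i * w i ≤ ∑ i ∈ Finset.range r, s i := by
  have hsplit := Finset.sum_range_add_sum_Ico (fun i => s i * w i) hrn
  have hsplitw := Finset.sum_range_add_sum_Ico w hrn
  have h1 : ∑ i ∈ Finset.Ico r n, s i * w i ≤ s r * ∑ i ∈ Finset.Ico r n, w i := by
    rw [Finset.mul_sum]
    refine Finset.sum_le_sum fun i hi => ?_
    exact mul_le_mul_of_nonneg_right (hs_anti (Finset.mem_Ico.mp hi).1) (hw0 i)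
  have h2 : ∑ i ∈ Finset.Ico r n, w i ≤ ∑ i ∈ Finset.range r, (1 - w i) := by
    have : ∑ i ∈ Finset.range r, (1 - w i) = (r : ℝ) - ∑ i ∈ Finset.range r, w i := by
      rw [Finset.sum_sub_distrib, Finset.sum_const, Finset.card_range, nsmul_eq_mul, mul_one]
    rw [this]
    linarith
  have h3 : s r * ∑ i ∈ Finset.Ico r n, w i ≤ ∑ i ∈ Finset.range r, s i * (1 - w i) := by
    calc s r * ∑ i ∈ Finset.Ico r n, w i ≤ s r * ∑ i ∈ Finset.range r, (1 - w i) :=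
          mul_le_mul_of_nonneg_left h2 (hs0 r)
      _ = ∑ i ∈ Finset.range r, s r * (1 - w i) := Finset.mul_sum _ _ _
      _ ≤ ∑ i ∈ Finset.range r, s i * (1 - w i) := by
          refine Finset.sum_le_sum fun i hi => ?_
          have hir : i ≤ r := le_of_lt (Finset.mem_range.mp hi)
          have : 0 ≤ 1 - w i := by linarith [hw1 i]
          exact mul_le_mul_of_nonneg_right (hs_anti hir) this
  have h4 : ∑ i ∈ Finset.range r, s i * w i + ∑ i ∈ Finset.range r, s i * (1 - w i)
      = ∑ i ∈ Finset.range r, s i := by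
    rw [← Finset.sum_add_distrib]
    exact Finset.sum_congr rfl fun i _ => by ring
  linarith

section KyFan
variable {m n r : ℕ} (X : Matrix (Fin m) (Fin n) ℝ)

lemma row_dot_self (L : Matrix (Fin r) (Fin m) ℝ) (hL : L * Lᵀ = 1) (k : Fin r) :
    (fun i => L k i) ⬝ᵥ (fun i => L k i) = 1 := by
  have h : (L * Lᵀ) k k = (fun i => L k i) ⬝ᵥ (fun i => L k i) := by
    simp [Matrix.mul_apply, dotProduct]
  rw [hL] at h
  simpa using h.symm

lemma sum_mulVec_dot_le (L : Matrix (Fin r) (Fin m) ℝ) (hL : L * Lᵀ = 1)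
    (u : Fin n → Fin m → ℝ) (horth : ∀ i j, i ≠ j → u i ⬝ᵥ u j = 0)
    (hnorm : ∀ j, u j ⬝ᵥ u j ≤ 1) :
    ∑ j, (L *ᵥ u j) ⬝ᵥ (L *ᵥ u j) ≤ (r : ℝ) := by
  have h1 : ∀ j, (L *ᵥ u j) ⬝ᵥ (L *ᵥ u j) = ∑ k, ((fun i => L k i) ⬝ᵥ u j) ^ 2 := by
    intro j
    simp only [dotProduct, Matrix.mulVec, sq]
  calc ∑ j, (L *ᵥ u j) ⬝ᵥ (L *ᵥ u j) = ∑ j, ∑ k, ((fun i => L k i) ⬝ᵥ u j) ^ 2 :=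
        Finset.sum_congr rfl fun j _ => h1 j
    _ = ∑ k, ∑ j, ((fun i => L k i) ⬝ᵥ u j) ^ 2 := Finset.sum_comm
    _ ≤ ∑ k : Fin r, (1 : ℝ) := by
        refine Finset.sum_le_sum fun k _ => ?_
        have := bessel u horth hnorm (fun i => L k i)
        rwa [row_dot_self L hL k] at this
    _ = (r : ℝ) := by simp

lemma kyfan_upper (hrn : r ≤ n) (L : Matrix (Fin r) (Fin m) ℝ) (R : Matrix (Fin r) (Fin n) ℝ)
    (hL : L * Lᵀ = 1) (hR : R * Rᵀ = 1) :
    (L * X * Rᵀ).trace ≤ ∑ i ∈ Finset.range r, svals X i := by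
  rw [trace_formula]
  set w : Fin n → ℝ := fun j =>
    ((L *ᵥ uvec X j) ⬝ᵥ (L *ᵥ uvec X j) + (R *ᵥ evec X j) ⬝ᵥ (R *ᵥ evec X j)) / 2 with hw
  have hu_orth : ∀ i j, i ≠ j → uvec X i ⬝ᵥ uvec X j = 0 := fun i j hij => by
    rw [u_dot, if_neg hij]
  have hu_norm : ∀ j, uvec X j ⬝ᵥ uvec X j ≤ 1 := fun j => by
    rw [u_dot, if_pos rfl]; split_ifs <;> norm_num
  have hv_orth : ∀ i j, i ≠ j → evec X i ⬝ᵥ evec X j = 0 := fun i j hij => by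
    rw [vortho, if_neg hij]
  have hv_norm : ∀ j, evec X j ⬝ᵥ evec X j ≤ 1 := fun j => by
    rw [vortho, if_pos rfl]
  have step1 : ∑ j, sv X j * ((L *ᵥ uvec X j) ⬝ᵥ (R *ᵥ evec X j)) ≤ ∑ j, sv X j * w j := by
    refine Finset.sum_le_sum fun j _ => ?_
    exact mul_le_mul_of_nonneg_left (dot_amgm _ _) (sv_nonneg X j)
  have hw0 : ∀ j, 0 ≤ w j := fun j => by
    have := dot_self_nonneg (L *ᵥ uvec X j)
    have := dot_self_nonneg (R *ᵥ evec X j)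
    rw [hw]; dsimp only; linarith
  have hw1 : ∀ j, w j ≤ 1 := fun j => by
    have h1 : (L *ᵥ uvec X j) ⬝ᵥ (L *ᵥ uvec X j) ≤ 1 :=
      le_trans (contraction hL (uvec X j)) (hu_norm j)
    have h2 : (R *ᵥ evec X j) ⬝ᵥ (R *ᵥ evec X j) ≤ 1 :=
      le_trans (contraction hR (evec X j)) (hv_norm j)
    rw [hw]; dsimp only; linarith
  have hwsum : ∑ j, w j ≤ (r : ℝ) := by
    have h1 := sum_mulVec_dot_le L hL (uvec X) hu_orth hu_norm
    have h2 := sum_mulVec_dot_le R hR (evec X) hv_orth hv_norm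
    rw [hw]
    rw [← Finset.sum_div, Finset.sum_add_distrib]
    linarith
  have step2 : ∑ j, sv X j * w j = ∑ i : Fin n, svals X (i : ℕ) * w (gperm X i) := by
    rw [← Equiv.sum_comp (gperm X) (fun j => sv X j * w j)]
    exact Finset.sum_congr rfl fun i _ => by rw [svals_g]
  set W : ℕ → ℝ := fun i => if h : i < n then w (gperm X ⟨i, h⟩) else 0 with hW
  have step3 : ∑ i : Fin n, svals X (i : ℕ) * w (gperm X i)
      = ∑ i ∈ Finset.range n, svals X i * W i := by
    rw [← Fin.sum_univ_eq_sum_range (fun i => svals X i * W i) n]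
    refine Finset.sum_congr rfl fun i _ => ?_
    rw [hW]
    dsimp only
    rw [dif_pos i.isLt]
  have final : ∑ i ∈ Finset.range n, svals X i * W i ≤ ∑ i ∈ Finset.range r, svals X i := by
    refine weight_sum hrn (svals X) W (svals_anti X) (svals_nonneg X) ?_ ?_ ?_
    · intro i; rw [hW]; dsimp only; split_ifs with h
      · exact hw0 _
      · exact le_refl 0
    · intro i; rw [hW]; dsimp only; split_ifs with h
      · exact hw1 _
      · norm_num
    · rw [← Fin.sum_univ_eq_sum_range W n]
      have : ∑ i : Fin n, W (i : ℕ) = ∑ i : Fin n, w (gperm X i) := by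
        refine Finset.sum_congr rfl fun i _ => ?_
        rw [hW]; dsimp only; rw [dif_pos i.isLt]
      rw [this, Equiv.sum_comp (gperm X) w]
      exact hwsum
  calc ∑ j, sv X j * ((L *ᵥ uvec X j) ⬝ᵥ (R *ᵥ evec X j)) ≤ ∑ j, sv X j * w j := step1
    _ = _ := step2
    _ = _ := step3
    _ ≤ _ := final

end KyFan

section Attained
variable {m n r : ℕ} (X : Matrix (Fin m) (Fin n) ℝ)

lemma euclid_inner {k : ℕ} (x y : EuclideanSpace ℝ (Fin k)) :
    (inner ℝ x y : ℝ) = (fun i => x i) ⬝ᵥ (fun i => y i) := by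
  simp [PiLp.inner_apply, RCLike.inner_apply, dotProduct, mul_comm]

lemma uvec_ne_zero {j : Fin n} (h : sv X j ≠ 0) : uvec X j ≠ 0 := by
  intro h0
  have := u_dot X j j
  rw [h0, if_pos rfl, if_neg h] at this
  simp [dotProduct] at this

lemma kyfan_attained (hrm : r ≤ m) (hrn : r < n) :
    ∃ L : Matrix (Fin r) (Fin m) ℝ, ∃ R : Matrix (Fin r) (Fin n) ℝ,
      L * Lᵀ = 1 ∧ R * Rᵀ = 1 ∧
      (L * X * Rᵀ).trace = ∑ i ∈ Finset.range r, svals X i := by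
  classical
  set wfam : Fin m → EuclideanSpace ℝ (Fin m) := fun i =>
    if h : (i : ℕ) < r then WithLp.toLp 2 (uvec X (gperm X ⟨(i : ℕ), lt_trans h hrn⟩)) else 0 with hwfam
  set sset : Set (Fin m) := {i | wfam i ≠ 0} with hsset
  -- basic facts about members of sset
  have hmem : ∀ i ∈ sset, ∃ h : (i : ℕ) < r,
      sv X (gperm X ⟨(i : ℕ), lt_trans h hrn⟩) ≠ 0 ∧
      wfam i = WithLp.toLp 2 (uvec X (gperm X ⟨(i : ℕ), lt_trans h hrn⟩)) := by
    intro i hi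
    by_cases h : (i : ℕ) < r
    · refine ⟨h, ?_, by rw [hwfam]; dsimp only; rw [dif_pos h]⟩
      intro hsv
      apply hi
      rw [hwfam]
      dsimp only
      rw [dif_pos h]
      show WithLp.toLp 2 (uvec X _) = _
      rw [uvec, if_pos hsv]
      simp
    · exact absurd (by rw [hwfam]; dsimp only; rw [dif_neg h] : wfam i = 0) hi
  have horthset : Orthonormal ℝ (sset.restrict wfam) := by
    rw [orthonormal_iff_ite]
    rintro ⟨i, hi⟩ ⟨j, hj⟩
    obtain ⟨hir, hisv, hiw⟩ := hmem i hi
    obtain ⟨hjr, hjsv, hjw⟩ := hmem j hj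
    rw [euclid_inner]
    show (fun k => (wfam i).ofLp k) ⬝ᵥ (fun k => (wfam j).ofLp k) = _
    rw [hiw, hjw]
    by_cases hij : i = j
    · subst hij
      rw [if_pos rfl]
      have := u_dot X (gperm X ⟨(i : ℕ), lt_trans hir hrn⟩) (gperm X ⟨(i : ℕ), lt_trans hir hrn⟩)
      rw [if_pos rfl, if_neg hisv] at this
      exact this
    · have hne : (⟨(i : ℕ), lt_trans hir hrn⟩ : Fin n) ≠ ⟨(j : ℕ), lt_trans hjr hrn⟩ := by
        intro h
        have hv : (i : ℕ) = (j : ℕ) := by simpa using congrArg Fin.val h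
        exact hij (Fin.val_injective hv)
      have hgne : gperm X ⟨(i : ℕ), lt_trans hir hrn⟩ ≠ gperm X ⟨(j : ℕ), lt_trans hjr hrn⟩ :=
        fun h => hne ((gperm X).injective h)
      rw [if_neg (by intro h; apply hij; exact Subtype.ext_iff.mp h)]
      have := u_dot X (gperm X ⟨(i : ℕ), lt_trans hir hrn⟩) (gperm X ⟨(j : ℕ), lt_trans hjr hrn⟩)
      rw [if_neg hgne] at this
      exact this
  obtain ⟨b, hb⟩ := horthset.exists_orthonormalBasis_extension_of_card_eq
    (by simp [finrank_euclideanSpace])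
  set L : Matrix (Fin r) (Fin m) ℝ := Matrix.of fun k i => b (Fin.castLE hrm k) i with hLdef
  set R : Matrix (Fin r) (Fin n) ℝ :=
    Matrix.of fun k j => evec X (gperm X (Fin.castLE hrn.le k)) j with hRdef
  have hLL : L * Lᵀ = 1 := by
    ext k k'
    rw [Matrix.mul_apply, Matrix.one_apply]
    have hinner := orthonormal_iff_ite.mp b.orthonormal (Fin.castLE hrm k) (Fin.castLE hrm k')
    rw [euclid_inner] at hinner
    have hcast : (Fin.castLE hrm k = Fin.castLE hrm k') ↔ (k = k') := by
      constructor
      · intro h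
        have hv : (k : ℕ) = (k' : ℕ) := by simpa using congrArg Fin.val h
        exact Fin.val_injective hv
      · intro h; rw [h]
    simp only [dotProduct] at hinner
    simp only [hLdef, Matrix.of_apply, Matrix.transpose_apply]
    rw [hinner]
    by_cases h : k = k'
    · rw [if_pos h, if_pos (hcast.mpr h)]
    · rw [if_neg h, if_neg (fun hh => h (hcast.mp hh))]
  have hRR : R * Rᵀ = 1 := by
    ext k k'
    rw [Matrix.mul_apply, Matrix.one_apply]
    have hvo := vortho X (gperm X (Fin.castLE hrn.le k)) (gperm X (Fin.castLE hrn.le k'))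
    simp only [dotProduct] at hvo
    simp only [hRdef, Matrix.of_apply, Matrix.transpose_apply]
    rw [hvo]
    have hcast : (gperm X (Fin.castLE hrn.le k) = gperm X (Fin.castLE hrn.le k')) ↔ (k = k') := by
      constructor
      · intro h
        have hv : (k : ℕ) = (k' : ℕ) := by simpa using congrArg Fin.val ((gperm X).injective h)
        exact Fin.val_injective hv
      · intro h; rw [h]
    by_cases h : k = k'
    · rw [if_pos h, if_pos (hcast.mpr h)]
    · rw [if_neg h, if_neg (fun hh => h (hcast.mp hh))]
  refine ⟨L, R, hLL, hRR, ?_⟩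
  rw [Matrix.trace]
  rw [← Fin.sum_univ_eq_sum_range (svals X) r]
  refine Finset.sum_congr rfl fun k _ => ?_
  rw [Matrix.diag_apply, sandwich_diag]
  have hRk : (fun j => R k j) = evec X (gperm X (Fin.castLE hrn.le k)) := by
    funext j; simp [hRdef]
  rw [hRk, Xv_eq, dotProduct_smul, smul_eq_mul]
  have hsval : svals X ((k : Fin r) : ℕ) = sv X (gperm X (Fin.castLE hrn.le k)) := by
    have := svals_g X (Fin.castLE hrn.le k)
    simpa using this
  rw [hsval]
  by_cases hsv : sv X (gperm X (Fin.castLE hrn.le k)) = 0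
  · rw [hsv]; ring
  · have hkm : (Fin.castLE hrm k : Fin m) ∈ sset := by
      rw [hsset]
      show wfam (Fin.castLE hrm k) ≠ 0
      rw [hwfam]
      dsimp only
      rw [dif_pos (by simpa using k.isLt : ((Fin.castLE hrm k : Fin m) : ℕ) < r)]
      have : (⟨((Fin.castLE hrm k : Fin m) : ℕ),
          (by simpa using lt_trans k.isLt hrn : ((Fin.castLE hrm k : Fin m) : ℕ) < n)⟩ : Fin n)
          = Fin.castLE hrn.le k := by
        ext; simp
      rw [this]
      intro h0
      exact uvec_ne_zero X hsv (congrArg WithLp.ofLp h0)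
    have hbk := hb (Fin.castLE hrm k) hkm
    have hLk : (fun i => L k i) = uvec X (gperm X (Fin.castLE hrn.le k)) := by
      funext i
      show b (Fin.castLE hrm k) i = _
      rw [hbk, hwfam]
      dsimp only
      rw [dif_pos (by simpa using k.isLt : ((Fin.castLE hrm k : Fin m) : ℕ) < r)]
      have : (⟨((Fin.castLE hrm k : Fin m) : ℕ),
          (by simpa using lt_trans k.isLt hrn : ((Fin.castLE hrm k : Fin m) : ℕ) < n)⟩ : Fin n)
          = Fin.castLE hrn.le k := by
        ext; simp
      rw [this]
    rw [hLk]
    have := u_dot X (gperm X (Fin.castLE hrn.le k)) (gperm X (Fin.castLE hrn.le k))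
    rw [if_pos rfl, if_neg hsv] at this
    rw [this]
    ring

end Attained

/-- The truncated nuclear norm `Σ_{i>r} σ_i(X)` equals the nuclear norm minus the
supremum of `tr(L X Rᵀ)` over all partial isometries `L`, `R` with `r` orthonormal
rows (this supremum being the Ky Fan `r`-norm). -/
theorem stmt_10 {m n r : ℕ} (hr : r < min m n) (X : Matrix (Fin m) (Fin n) ℝ) :
    (∑ i ∈ Finset.Ico r n, svals X i) =
      (∑ i ∈ Finset.range n, svals X i) -
        sSup {t : ℝ | ∃ L : Matrix (Fin r) (Fin m) ℝ, ∃ R : Matrix (Fin r) (Fin n) ℝ,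
          L * Lᵀ = 1 ∧ R * Rᵀ = 1 ∧ t = (L * X * Rᵀ).trace} := by
  have hrm : r ≤ m := le_of_lt (lt_of_lt_of_le hr (min_le_left m n))
  have hrn : r < n := lt_of_lt_of_le hr (min_le_right m n)
  obtain ⟨L0, R0, hL0, hR0, htr⟩ := kyfan_attained X hrm hrn
  have hgreat : IsGreatest {t : ℝ | ∃ L : Matrix (Fin r) (Fin m) ℝ,
      ∃ R : Matrix (Fin r) (Fin n) ℝ, L * Lᵀ = 1 ∧ R * Rᵀ = 1 ∧ t = (L * X * Rᵀ).trace}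
      (∑ i ∈ Finset.range r, svals X i) := by
    constructor
    · exact ⟨L0, R0, hL0, hR0, htr.symm⟩
    · rintro t ⟨L, R, hL, hR, rfl⟩
      exact kyfan_upper X hrn.le L R hL hR
  rw [hgreat.csSup_eq]
  have hsplit := Finset.sum_range_add_sum_Ico (svals X) hrn.le
  linarith
end

section
/- Let W be an n×n real symmetric positive definite matrix and let r < n. If the truncated nuclear norm of the 4n×3n matrix Z(W,H,Δ) (defined as the block matrix [[I_n,0,(A+Δ)ᵀ],[0,I_n,I_n],[Hᵀ,−W,−BBᵀ],[−W,H,0]]) at truncation level 2n equals 0, i.e., σ_i(Z) = 0 for all i > 2n, then (A+Δ)W(A+Δ)ᵀ − W + BBᵀ = 0. -/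
open Matrix

set_option maxHeartbeats 1000000 in
/-- If all singular values of `X` from the `k`-th one onwards vanish, then `X` has rank
at most `k`. -/
lemma rank_le_of_svals_eq_zero {I J : Type*} [Fintype I] [Fintype J] [DecidableEq J]
    (X : Matrix I J ℝ) (k : ℕ) (h : ∀ i : ℕ, k ≤ i → svals X i = 0) : X.rank ≤ k := by
  classical
  set f : Fin (Fintype.card J) → ℝ := fun j =>
    Real.sqrt ((Matrix.isHermitian_conjTranspose_mul_self X).eigenvalues
      ((Fintype.equivFin J).symm j)) with hf
  have hzero : ∀ i : ℕ, k ≤ i → ∀ h2 : i < Fintype.card J,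
      f (Tuple.sort f (Fin.rev ⟨i, h2⟩)) = 0 := by
    intro i hi h2
    have h := h i hi
    unfold svals at h
    rw [dif_pos h2] at h
    rw [← hf] at h
    exact h
  have hlt : ∀ t : Fin (Fintype.card J - k), k + (t : ℕ) < Fintype.card J := by
    intro t; have := t.isLt; omega
  have hinj : Function.Injective
      (fun t : Fin (Fintype.card J - k) =>
        (⟨Tuple.sort f (Fin.rev ⟨k + (t : ℕ), hlt t⟩),
          hzero _ (by omega) (hlt t)⟩ : {j : Fin (Fintype.card J) // f j = 0})) := by
    intro a b hab
    simp only [Subtype.mk_eq_mk] at hab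
    have h2 := Fin.rev_injective ((Tuple.sort f).injective hab)
    have h3 : k + (a : ℕ) = k + (b : ℕ) := congrArg Fin.val h2
    exact Fin.ext (by omega)
  have hcard0 : Fintype.card J - k ≤ Fintype.card {j : Fin (Fintype.card J) // f j = 0} := by
    simpa using Fintype.card_le_of_injective _ hinj
  have hA := Matrix.isHermitian_conjTranspose_mul_self X
  have hiff : ∀ j : Fin (Fintype.card J), f j = 0 ↔
      hA.eigenvalues ((Fintype.equivFin J).symm j) = 0 := fun j =>
    Real.sqrt_eq_zero (Matrix.eigenvalues_conjTranspose_mul_self_nonneg X _)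
  have hrk : X.rank = Fintype.card {i : J // hA.eigenvalues i ≠ 0} := by
    rw [← Matrix.rank_conjTranspose_mul_self X]
    exact hA.rank_eq_card_non_zero_eigs
  have hequiv : Fintype.card {i : J // hA.eigenvalues i ≠ 0}
      = Fintype.card {j : Fin (Fintype.card J) // ¬ f j = 0} := by
    refine Fintype.card_congr ((Fintype.equivFin J).subtypeEquiv fun i => ?_)
    rw [hiff, Equiv.symm_apply_apply]
  have hcompl : Fintype.card {j : Fin (Fintype.card J) // ¬ f j = 0}
      = Fintype.card (Fin (Fintype.card J))
        - Fintype.card {j : Fin (Fintype.card J) // f j = 0} :=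
    Fintype.card_subtype_compl _
  have hle : Fintype.card {j : Fin (Fintype.card J) // f j = 0}
      ≤ Fintype.card (Fin (Fintype.card J)) := Fintype.card_subtype_le _
  rw [hrk, hequiv, hcompl, Fintype.card_fin]
  omega

/-- If a block matrix `[[1, T], [L, R]]` has rank at most the size of the identity block,
then `R = L * T`. -/
lemma blocks_eq_of_rank_le {a b c : Type*} [Fintype a] [Fintype b] [Fintype c]
    [DecidableEq a] (T : Matrix a c ℝ) (L : Matrix b a ℝ) (R : Matrix b c ℝ)
    (h : (Matrix.fromBlocks 1 T L R).rank ≤ Fintype.card a) : R = L * T := by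
  classical
  by_contra hne
  have hex : ∃ q₀ r₀, R q₀ r₀ ≠ (L * T) q₀ r₀ := by
    by_contra hc; push_neg at hc
    exact hne (by ext q r; exact hc q r)
  obtain ⟨q₀, r₀, hqr⟩ := hex
  set M := Matrix.fromBlocks (1 : Matrix a a ℝ) T L R with hM
  set g : Option a → (a ⊕ b) → ℝ :=
    fun o => o.elim (fun i => M i (Sum.inr r₀)) (fun x i => M i (Sum.inl x)) with hg
  have hli : LinearIndependent ℝ g := by
    rw [Fintype.linearIndependent_iff]
    intro c hc
    have hpt : ∀ i : a ⊕ b,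
        c none * M i (Sum.inr r₀) + ∑ x, c (some x) * M i (Sum.inl x) = 0 := by
      intro i
      have := congrFun hc i
      simpa [hg, Fintype.sum_option, Finset.sum_apply] using this
    have hcsome : ∀ x : a, c (some x) = -(c none * T x r₀) := by
      intro x
      have h1 := hpt (Sum.inl x)
      simp only [hM, Matrix.fromBlocks_apply₁₂, Matrix.fromBlocks_apply₁₁,
        Matrix.one_apply, mul_ite, mul_one, mul_zero] at h1
      rw [Finset.sum_ite_eq Finset.univ x (fun x' => c (some x'))] at h1
      simp at h1
      linarith
    have h2 := hpt (Sum.inr q₀)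
    simp only [hM, Matrix.fromBlocks_apply₂₂, Matrix.fromBlocks_apply₂₁] at h2
    have h3 : c none * (R q₀ r₀ - (L * T) q₀ r₀) = 0 := by
      rw [Matrix.mul_apply]
      have : ∑ x, c (some x) * L q₀ x = -(c none * ∑ x, L q₀ x * T x r₀) := by
        rw [Finset.mul_sum, ← Finset.sum_neg_distrib]
        exact Finset.sum_congr rfl fun x _ => by rw [hcsome x]; ring
      rw [this] at h2
      ring_nf
      ring_nf at h2
      linarith
    have hc0 : c none = 0 := by
      rcases mul_eq_zero.mp h3 with h | h
      · exact h
      · exact absurd (sub_eq_zero.mp h) hqr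
    intro o
    cases o with
    | none => exact hc0
    | some x => rw [hcsome x, hc0]; ring
  have hsub : Set.range g ⊆ Set.range Mᵀ := by
    rintro v ⟨o, rfl⟩
    cases o with
    | none => exact ⟨Sum.inr r₀, rfl⟩
    | some x => exact ⟨Sum.inl x, rfl⟩
  have hrank_ge : Fintype.card a + 1 ≤ M.rank := by
    have h1 : M.rank = Module.finrank ℝ (Submodule.span ℝ (Set.range Mᵀ)) :=
      Matrix.rank_eq_finrank_span_cols M
    have h2 : Module.finrank ℝ (Submodule.span ℝ (Set.range g)) = Fintype.card a + 1 := by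
      rw [finrank_span_eq_card hli]
      simp
    have h3 : Submodule.span ℝ (Set.range g) ≤ Submodule.span ℝ (Set.range Mᵀ) :=
      Submodule.span_mono hsub
    have h4 := Submodule.finrank_mono h3
    omega
  omega

/-- If `W ≻ 0` and the truncated nuclear norm at level `2n` of the structured `4n × 3n`
matrix `Z(W,H,Δ) = [[I,0,(A+Δ)ᵀ],[0,I,I],[Hᵀ,−W,−BBᵀ],[−W,H,0]]` vanishes, i.e.
`σ_i(Z) = 0` for all `i > 2n`, then `(A+Δ)W(A+Δ)ᵀ − W + BBᵀ = 0`. -/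
theorem stmt_11 {n m : ℕ} (A W H Δ : Matrix (Fin n) (Fin n) ℝ)
    (B : Matrix (Fin n) (Fin m) ℝ) (hW : W.PosDef)
    (Z : Matrix ((Fin n ⊕ Fin n) ⊕ (Fin n ⊕ Fin n)) ((Fin n ⊕ Fin n) ⊕ Fin n) ℝ)
    (hZ : Z = Matrix.fromBlocks
      (1 : Matrix (Fin n ⊕ Fin n) (Fin n ⊕ Fin n) ℝ)
      (Matrix.fromRows (A + Δ)ᵀ (1 : Matrix (Fin n) (Fin n) ℝ))
      (Matrix.fromBlocks Hᵀ (-W) (-W) H)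
      (Matrix.fromRows (-(B * Bᵀ)) (0 : Matrix (Fin n) (Fin n) ℝ)))
    (hTNN : ∀ i : ℕ, 2 * n ≤ i → svals Z i = 0) :
    (A + Δ) * W * (A + Δ)ᵀ - W + B * Bᵀ = 0 := by
  have hrank : Z.rank ≤ 2 * n := rank_le_of_svals_eq_zero Z (2 * n) hTNN
  rw [hZ] at hrank
  have hcard : Fintype.card (Fin n ⊕ Fin n) = 2 * n := by
    simp [Fintype.card_sum]; ring
  have key := blocks_eq_of_rank_le
    (Matrix.fromRows (A + Δ)ᵀ (1 : Matrix (Fin n) (Fin n) ℝ))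
    (Matrix.fromBlocks Hᵀ (-W) (-W) H)
    (Matrix.fromRows (-(B * Bᵀ)) (0 : Matrix (Fin n) (Fin n) ℝ))
    (by rw [hcard]; exact hrank)
  rw [Matrix.fromBlocks_mul_fromRows] at key
  rw [Matrix.fromRows_inj.eq_iff] at key
  obtain ⟨eq1, eq2⟩ := key
  have hWs : Wᵀ = W := by
    ext i j
    simpa using (hW.isHermitian.apply j i).symm
  have hH : H = W * (A + Δ)ᵀ := by
    have h : (0 : Matrix (Fin n) (Fin n) ℝ) = -(W * (A + Δ)ᵀ) + H := by
      simpa [Matrix.neg_mul] using eq2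
    rw [eq_comm, add_comm, ← sub_eq_add_neg, sub_eq_zero] at h
    exact h
  have hHt : Hᵀ * (A + Δ)ᵀ = (A + Δ) * W * (A + Δ)ᵀ := by
    rw [hH, Matrix.transpose_mul, Matrix.transpose_transpose, hWs, Matrix.mul_assoc]
  have eq1' : -(B * Bᵀ) = (A + Δ) * W * (A + Δ)ᵀ - W := by
    rw [← hHt]
    simpa [Matrix.neg_mul, sub_eq_add_neg] using eq1
  rw [← eq1', neg_add_cancel]
end

section
/- Let X ∈ ℝ^{m×n} have rank q and compact SVD X = U_q S_q V_qᵀ with S_q = diag(σ₁,…,σ_q), σ_i > 0, U_q ∈ ℝ^{m×q} and V_q ∈ ℝ^{n×q} having orthonormal columns. Then every matrix of the form U_q V_qᵀ + Y with Y ∈ ℝ^{m×n} satisfying U_qᵀY = 0, Y V_q = 0, and operator norm ‖Y‖ ≤ 1, is a subgradient of the nuclear norm ‖·‖_∗ at X, i.e., ‖Z‖_∗ ≥ ‖X‖_∗ + ⟨U_qV_qᵀ + Y, Z − X⟩ for all Z ∈ ℝ^{m×n}. -/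
open Matrix Polynomial

lemma charpoly_conj {n : Type*} [Fintype n] [DecidableEq n] {R : Type*} [CommRing R]
    (P A Q : Matrix n n R) (hPQ : P * Q = 1) :
    (P * A * Q).charpoly = A.charpoly := by
  have hPQ' : P.map C * Q.map C = 1 := by
    rw [← Matrix.map_mul, hPQ, Matrix.map_one _ (map_zero C) (map_one C)]
  have hscal : ∀ M : Matrix n n R[X], Matrix.scalar n (X : R[X]) * M = M * Matrix.scalar n X :=
    fun M => (Matrix.scalar_commute (X : R[X]) (fun r => Commute.all _ _) M)
  have key : charmatrix (P * A * Q) = P.map C * charmatrix A * Q.map C := by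
    rw [charmatrix, charmatrix]
    rw [Matrix.mul_sub, Matrix.sub_mul]
    congr 1
    · rw [← hscal, mul_assoc, hPQ', mul_one]
    · simp only [RingHom.mapMatrix_apply, Matrix.map_mul]
  have hdet : (P.map C).det * (Q.map C).det = 1 := by
    rw [← Matrix.det_mul, hPQ', Matrix.det_one]
  rw [Matrix.charpoly, Matrix.charpoly, key, Matrix.det_mul, Matrix.det_mul]
  calc (P.map C).det * (charmatrix A).det * (Q.map C).det
      = (P.map C).det * (Q.map C).det * (charmatrix A).det := by ring
    _ = (charmatrix A).det := by rw [hdet, one_mul]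

lemma charpoly_diagonal {n : Type*} [Fintype n] [DecidableEq n] {R : Type*} [CommRing R]
    (d : n → R) : (Matrix.diagonal d).charpoly = ∏ i, (X - C (d i)) := by
  rw [Matrix.charpoly]
  have : charmatrix (Matrix.diagonal d) = Matrix.diagonal (fun i => X - C (d i)) := by
    ext i j
    by_cases h : i = j
    · subst h; simp [charmatrix_apply_eq]
    · simp [charmatrix_apply_ne _ _ _ h, Matrix.diagonal_apply_ne _ h]
  rw [this, Matrix.det_diagonal]

lemma eig_sum_of_conj {n : Type*} [Fintype n] [DecidableEq n] {H : Matrix n n ℝ}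
    (hH : H.IsHermitian) (d : n → ℝ) (V : Matrix n n ℝ) (hV : V * Vᵀ = 1)
    (hHd : H = V * Matrix.diagonal d * Vᵀ) (g : ℝ → ℝ) :
    ∑ i, g (hH.eigenvalues i) = ∑ i, g (d i) := by
  have hW : (hH.eigenvectorUnitary : Matrix n n ℝ) * star (hH.eigenvectorUnitary : Matrix n n ℝ)
      = 1 := by
    simpa using (Matrix.mem_unitaryGroup_iff.mp hH.eigenvectorUnitary.2)
  have hdiag : Matrix.diagonal (RCLike.ofReal ∘ hH.eigenvalues) = Matrix.diagonal hH.eigenvalues := by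
    congr 1
  have h1 : H.charpoly = ∏ i, (X - C (hH.eigenvalues i)) := by
    conv_lhs => rw [hH.spectral_theorem, Unitary.conjStarAlgAut_apply]
    rw [hdiag, charpoly_conj _ _ _ hW, _root_.charpoly_diagonal]
  have h2 : H.charpoly = ∏ i, (X - C (d i)) := by
    rw [hHd, charpoly_conj _ _ _ hV, _root_.charpoly_diagonal]
  have hprod : (Multiset.map (fun a => X - C a) (Multiset.map hH.eigenvalues Finset.univ.val)).prod
      = (Multiset.map (fun a => X - C a) (Multiset.map d Finset.univ.val)).prod := by
    rw [Multiset.map_map, Multiset.map_map]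
    rw [← Finset.prod_eq_multiset_prod, ← Finset.prod_eq_multiset_prod]
    simp only [Function.comp]
    rw [← h1, ← h2]
  have hms : Multiset.map hH.eigenvalues Finset.univ.val = Multiset.map d Finset.univ.val := by
    have := congrArg Polynomial.roots hprod
    rwa [Polynomial.roots_multiset_prod_X_sub_C, Polynomial.roots_multiset_prod_X_sub_C] at this
  calc ∑ i, g (hH.eigenvalues i) = (Multiset.map g (Multiset.map hH.eigenvalues Finset.univ.val)).sum := by
        rw [Multiset.map_map]; rfl
    _ = (Multiset.map g (Multiset.map d Finset.univ.val)).sum := by rw [hms]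
    _ = ∑ i, g (d i) := by rw [Multiset.map_map]; rfl

lemma sum_svals {I J : Type*} [Fintype I] [Fintype J] [DecidableEq J]
    (A : Matrix I J ℝ) :
    ∑ i ∈ Finset.range (Fintype.card J), svals A i =
      ∑ j : J, Real.sqrt ((Matrix.isHermitian_conjTranspose_mul_self A).eigenvalues j) := by
  classical
  set f : Fin (Fintype.card J) → ℝ := fun j =>
    Real.sqrt ((Matrix.isHermitian_conjTranspose_mul_self A).eigenvalues
      ((Fintype.equivFin J).symm j)) with hf
  have h1 : ∑ i ∈ Finset.range (Fintype.card J), svals A i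
      = ∑ i : Fin (Fintype.card J), f (Tuple.sort f (Fin.rev i)) := by
    rw [← Fin.sum_univ_eq_sum_range]
    refine Finset.sum_congr rfl fun i _ => ?_
    show svals A i.val = _
    unfold svals
    rw [dif_pos i.isLt]
  rw [h1]
  have h2 : ∑ i : Fin (Fintype.card J), f (Tuple.sort f (Fin.rev i))
      = ∑ i : Fin (Fintype.card J), f i :=
    Equiv.sum_comp (Fin.revPerm.trans (Tuple.sort f)) f
  rw [h2, hf]
  exact Equiv.sum_comp (Fintype.equivFin J).symm (fun j => Real.sqrt ((Matrix.isHermitian_conjTranspose_mul_self A).eigenvalues j))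

lemma svals_zero_max {I J : Type*} [Fintype I] [Fintype J] [DecidableEq J]
    (A : Matrix I J ℝ) (j : J) :
    Real.sqrt ((Matrix.isHermitian_conjTranspose_mul_self A).eigenvalues j) ≤ svals A 0 := by
  classical
  set f : Fin (Fintype.card J) → ℝ := fun j =>
    Real.sqrt ((Matrix.isHermitian_conjTranspose_mul_self A).eigenvalues
      ((Fintype.equivFin J).symm j)) with hf
  have hcard : 0 < Fintype.card J := Fintype.card_pos_iff.mpr ⟨j⟩
  have : svals A 0 = f (Tuple.sort f (Fin.rev ⟨0, hcard⟩)) := by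
    unfold svals; rw [dif_pos hcard]
  rw [this]
  have hj : f ((Fintype.equivFin J) j) =
      Real.sqrt ((Matrix.isHermitian_conjTranspose_mul_self A).eigenvalues j) := by
    simp [hf]
  rw [← hj]
  set k := (Fintype.equivFin J) j
  have := Tuple.monotone_sort f (a := (Tuple.sort f).symm k) (b := Fin.rev ⟨0, hcard⟩) ?_
  · simpa using this
  · rw [Fin.le_def]
    simp [Fin.rev]
    omega

lemma quadform_le {n : Type*} [Fintype n] [DecidableEq n] {H : Matrix n n ℝ}
    (hH : H.IsHermitian) (c : ℝ) (hc : ∀ j, hH.eigenvalues j ≤ c) (x : n → ℝ) :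
    x ⬝ᵥ (H *ᵥ x) ≤ c * (x ⬝ᵥ x) := by
  have hW : (hH.eigenvectorUnitary : Matrix n n ℝ) * star (hH.eigenvectorUnitary : Matrix n n ℝ)
      = 1 := by
    simpa using (Matrix.mem_unitaryGroup_iff.mp hH.eigenvectorUnitary.2)
  set W : Matrix n n ℝ := (hH.eigenvectorUnitary : Matrix n n ℝ) with hWdef
  have hstar : star W = Wᵀ := by
    rw [Matrix.star_eq_conjTranspose, Matrix.conjTranspose_eq_transpose_of_trivial]
  have hWWt : W * Wᵀ = 1 := by rw [← hstar]; exact hW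
  set y : n → ℝ := Wᵀ *ᵥ x with hy
  have hdiag : Matrix.diagonal (RCLike.ofReal ∘ hH.eigenvalues) = Matrix.diagonal hH.eigenvalues := by
    congr 1
  have hxHx : x ⬝ᵥ (H *ᵥ x) = y ⬝ᵥ (Matrix.diagonal hH.eigenvalues *ᵥ y) := by
    conv_lhs => rw [hH.spectral_theorem, Unitary.conjStarAlgAut_apply]
    rw [hdiag, hstar, ← hWdef]
    rw [← Matrix.mulVec_mulVec, ← Matrix.mulVec_mulVec]
    rw [Matrix.dotProduct_mulVec x W, ← Matrix.mulVec_transpose, ← hy]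
  have hyy : y ⬝ᵥ y = x ⬝ᵥ x := by
    calc y ⬝ᵥ y = y ⬝ᵥ (Wᵀ *ᵥ x) := by rw [← hy]
      _ = (y ᵥ* Wᵀ) ⬝ᵥ x := by rw [Matrix.dotProduct_mulVec]
      _ = ((x ᵥ* W) ᵥ* Wᵀ) ⬝ᵥ x := by rw [hy, Matrix.mulVec_transpose]
      _ = (x ᵥ* (W * Wᵀ)) ⬝ᵥ x := by rw [Matrix.vecMul_vecMul]
      _ = x ⬝ᵥ x := by rw [hWWt, Matrix.vecMul_one]
  rw [hxHx, ← hyy]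
  show ∑ i, y i * (Matrix.diagonal hH.eigenvalues *ᵥ y) i ≤ c * ∑ i, y i * y i
  rw [Finset.mul_sum]
  apply Finset.sum_le_sum
  intro j _
  rw [Matrix.mulVec_diagonal]
  have h1 : y j * (hH.eigenvalues j * y j) = hH.eigenvalues j * (y j * y j) := by ring
  rw [h1]
  exact mul_le_mul_of_nonneg_right (hc j) (mul_self_nonneg _)

lemma trace_eq_sum_cols {m n : Type*} [Fintype m] [Fintype n] [DecidableEq n]
    (G Z : Matrix m n ℝ) (W : Matrix n n ℝ) (hW : W * Wᵀ = 1) :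
    (Gᵀ * Z).trace = ∑ j, (G *ᵥ (fun k => W k j)) ⬝ᵥ (Z *ᵥ (fun k => W k j)) := by
  have diag_entry : ∀ (M : Matrix n n ℝ) (j : n),
      (Wᵀ * M * W) j j = (fun k => W k j) ⬝ᵥ (M *ᵥ (fun k => W k j)) := by
    intro M j
    simp only [Matrix.mul_apply, Matrix.mulVec, dotProduct, Matrix.transpose_apply,
      Finset.sum_mul, Finset.mul_sum]
    rw [Finset.sum_comm]
    refine Finset.sum_congr rfl fun a _ => Finset.sum_congr rfl fun b _ => by ring
  have htr : (Wᵀ * (Gᵀ * Z) * W).trace = (Gᵀ * Z).trace := by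
    rw [Matrix.trace_mul_cycle, ← Matrix.mul_assoc, hW, Matrix.one_mul]
  rw [← htr, Matrix.trace]
  refine Finset.sum_congr rfl fun j _ => ?_
  rw [Matrix.diag_apply, diag_entry]
  rw [← Matrix.mulVec_mulVec, Matrix.dotProduct_mulVec, Matrix.vecMul_transpose]

lemma dot_mulVec_mulVec {k l l' : Type*} [Fintype k] [Fintype l] [Fintype l']
    (A : Matrix k l ℝ) (B : Matrix k l' ℝ) (a : l → ℝ) (b : l' → ℝ) :
    (A *ᵥ a) ⬝ᵥ (B *ᵥ b) = a ⬝ᵥ ((Aᵀ * B) *ᵥ b) := by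
  rw [← Matrix.mulVec_mulVec, Matrix.dotProduct_mulVec a, Matrix.vecMul_transpose]

lemma opnorm_bound {m n q : ℕ} (Uq : Matrix (Fin m) (Fin q) ℝ) (Vq : Matrix (Fin n) (Fin q) ℝ)
    (hUq : Uqᵀ * Uq = 1) (hVq : Vqᵀ * Vq = 1) (Y : Matrix (Fin m) (Fin n) ℝ)
    (hYU : Uqᵀ * Y = 0) (hYV : Y * Vq = 0)
    (hYe : ∀ x : Fin n → ℝ, x ⬝ᵥ ((Yᵀ * Y) *ᵥ x) ≤ 1 * (x ⬝ᵥ x)) :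
    ∀ x : Fin n → ℝ, ((Uq * Vqᵀ + Y) *ᵥ x) ⬝ᵥ ((Uq * Vqᵀ + Y) *ᵥ x) ≤ x ⬝ᵥ x := by
  intro x
  set a : Fin q → ℝ := Vqᵀ *ᵥ x with ha
  set p : Fin n → ℝ := Vq *ᵥ a with hp
  set r : Fin n → ℝ := x - p with hr
  have hxpr : x = p + r := by rw [hr]; ring
  have hpp : p ⬝ᵥ p = a ⬝ᵥ a := by
    rw [hp, dot_mulVec_mulVec, hVq, Matrix.one_mulVec]
  have hpx : p ⬝ᵥ x = a ⬝ᵥ a := by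
    rw [hp, dotProduct_comm, Matrix.dotProduct_mulVec, ← Matrix.mulVec_transpose, ← ha]
  have hpr : p ⬝ᵥ r = 0 := by
    rw [hr, dotProduct_sub, hpp, hpx, sub_self]
  have hxx : x ⬝ᵥ x = a ⬝ᵥ a + r ⬝ᵥ r := by
    conv_lhs => rw [hxpr]
    rw [add_dotProduct, dotProduct_add, dotProduct_add,
      dotProduct_comm r p, hpr, hpp]
    ring
  have hYp : Y *ᵥ p = 0 := by
    rw [hp, Matrix.mulVec_mulVec, hYV, Matrix.zero_mulVec]
  have hGx : (Uq * Vqᵀ + Y) *ᵥ x = Uq *ᵥ a + Y *ᵥ r := by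
    rw [Matrix.add_mulVec, ← Matrix.mulVec_mulVec, ← ha]
    congr 1
    conv_lhs => rw [hxpr]
    rw [Matrix.mulVec_add, hYp, zero_add]
  have hcross : (Uq *ᵥ a) ⬝ᵥ (Y *ᵥ r) = 0 := by
    rw [dot_mulVec_mulVec, hYU, Matrix.zero_mulVec, dotProduct_zero]
  have hUa : (Uq *ᵥ a) ⬝ᵥ (Uq *ᵥ a) = a ⬝ᵥ a := by
    rw [dot_mulVec_mulVec, hUq, Matrix.one_mulVec]
  have hYr : (Y *ᵥ r) ⬝ᵥ (Y *ᵥ r) ≤ r ⬝ᵥ r := by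
    rw [dot_mulVec_mulVec]
    calc r ⬝ᵥ ((Yᵀ * Y) *ᵥ r) ≤ 1 * (r ⬝ᵥ r) := hYe r
      _ = r ⬝ᵥ r := one_mul _
  rw [hGx, hxx]
  rw [add_dotProduct, dotProduct_add, dotProduct_add,
    dotProduct_comm (Y *ᵥ r) (Uq *ᵥ a), hcross, hUa]
  linarith

lemma sum_svals_X {m n q : ℕ} (X : Matrix (Fin m) (Fin n) ℝ)
    (Uq : Matrix (Fin m) (Fin q) ℝ) (Vq : Matrix (Fin n) (Fin q) ℝ)
    (σ : Fin q → ℝ) (hσ : ∀ i, 0 < σ i)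
    (hUq : Uqᵀ * Uq = 1) (hVq : Vqᵀ * Vq = 1)
    (hX : X = Uq * Matrix.diagonal σ * Vqᵀ) :
    ∑ j : Fin n, Real.sqrt ((Matrix.isHermitian_conjTranspose_mul_self X).eigenvalues j)
      = ∑ i, σ i := by
  classical
  -- q ≤ n
  have hqn : q ≤ n := by
    have h1 : (1 : Matrix (Fin q) (Fin q) ℝ).rank = q := by
      rw [Matrix.rank_one, Fintype.card_fin]
    have h2 := Matrix.rank_mul_le Vqᵀ Vq
    rw [hVq, h1] at h2
    have h3 : Vqᵀ.rank ≤ n := by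
      simpa [Fintype.card_fin] using Matrix.rank_le_card_width Vqᵀ
    exact le_trans (le_trans h2 inf_le_left) h3
  -- X^H X
  have hXtX : Xᴴ * X = Vq * Matrix.diagonal (fun i => σ i ^ 2) * Vqᵀ := by
    rw [Matrix.conjTranspose_eq_transpose_of_trivial, hX]
    rw [Matrix.transpose_mul, Matrix.transpose_mul, Matrix.transpose_transpose,
      Matrix.diagonal_transpose]
    simp only [Matrix.mul_assoc]
    rw [← Matrix.mul_assoc Uqᵀ Uq, hUq, Matrix.one_mul,
      ← Matrix.mul_assoc (Matrix.diagonal σ) (Matrix.diagonal σ),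
      Matrix.diagonal_mul_diagonal]
    congr 2
    ext i
    ring
  -- orthonormal extension
  set v : Fin n → EuclideanSpace ℝ (Fin n) :=
    fun j => if h : (j : ℕ) < q then WithLp.toLp 2 (fun k => Vq k ⟨j, h⟩) else 0 with hvdef
  set s : Set (Fin n) := {j | (j : ℕ) < q} with hsdef
  have hv : Orthonormal ℝ (s.restrict v) := by
    rw [orthonormal_iff_ite]
    intro i j
    have hi : ((i : Fin n) : ℕ) < q := i.2
    have hj : ((j : Fin n) : ℕ) < q := j.2
    have hri : s.restrict v i = WithLp.toLp 2 fun k => Vq k ⟨(i : Fin n), hi⟩ := by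
      simp only [Set.restrict_apply, hvdef, dif_pos hi]
      simp [Set.restrict, hi]
    have hrj : s.restrict v j = WithLp.toLp 2 fun k => Vq k ⟨(j : Fin n), hj⟩ := by
      simp only [Set.restrict_apply, hvdef, dif_pos hj]
      simp [Set.restrict, hj]
    have hentry : (Vqᵀ * Vq) ⟨(i : Fin n), hi⟩ ⟨(j : Fin n), hj⟩
        = ∑ k, Vq k ⟨(i : Fin n), hi⟩ * Vq k ⟨(j : Fin n), hj⟩ := by
      rw [Matrix.mul_apply]
      refine Finset.sum_congr rfl fun k _ => rfl
    have hinner : (inner ℝ (s.restrict v i) (s.restrict v j) : ℝ)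
        = (Vqᵀ * Vq) ⟨(i : Fin n), hi⟩ ⟨(j : Fin n), hj⟩ := by
      rw [hentry]
      simp only [PiLp.inner_apply, RCLike.inner_apply, conj_trivial]
      exact Finset.sum_congr rfl fun k _ => by
        rw [show s.restrict v i k = Vq k ⟨(i : Fin n), hi⟩ from by rw [hri],
          show s.restrict v j k = Vq k ⟨(j : Fin n), hj⟩ from by rw [hrj], mul_comm]
    rw [hinner, hVq, Matrix.one_apply]
    have : (⟨(i : Fin n), hi⟩ : Fin q) = ⟨(j : Fin n), hj⟩ ↔ i = j := by
      constructor
      · intro h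
        have : ((i : Fin n) : ℕ) = ((j : Fin n) : ℕ) := by simpa using congrArg Fin.val h
        exact Subtype.ext (Fin.ext this)
      · intro h; subst h; rfl
    by_cases h : i = j
    · rw [if_pos h, if_pos (this.mpr h)]
    · rw [if_neg h, if_neg (fun hc => h (this.mp hc))]
  obtain ⟨b, hb⟩ := hv.exists_orthonormalBasis_extension_of_card_eq
    (by simp [finrank_euclideanSpace])
  set Vf : Matrix (Fin n) (Fin n) ℝ := fun k j => b j k with hVfdef
  have hVfo : Vfᵀ * Vf = 1 := by
    ext i j
    have horth := orthonormal_iff_ite.mp b.orthonormal i j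
    have : (inner ℝ (b i) (b j)) = ∑ k, b i k * b j k := by
      simp [PiLp.inner_apply, mul_comm]
    rw [this] at horth
    rw [Matrix.mul_apply, Matrix.one_apply]
    exact horth
  have hVfo2 : Vf * Vfᵀ = 1 := mul_eq_one_comm.mp hVfo
  set d : Fin n → ℝ := fun j => if h : (j : ℕ) < q then σ ⟨j, h⟩ ^ 2 else 0 with hddef
  -- membership / reindexing
  have hmem : ∀ j : Fin n, j ∈ Finset.univ.map (Fin.castLEEmb hqn) ↔ (j : ℕ) < q := by
    intro j
    simp only [Finset.mem_map, Finset.mem_univ, true_and, Fin.coe_castLEEmb]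
    constructor
    · rintro ⟨i, rfl⟩; exact i.isLt
    · intro h; exact ⟨⟨(j : ℕ), h⟩, by ext; simp⟩
  have hsum : ∀ g : Fin n → ℝ, (∀ j : Fin n, ¬ (j : ℕ) < q → g j = 0) →
      ∑ j, g j = ∑ i : Fin q, g (Fin.castLE hqn i) := by
    intro g hg
    have e1 : ∑ j ∈ Finset.univ.map (Fin.castLEEmb hqn), g j = ∑ j, g j :=
      Finset.sum_subset (Finset.subset_univ _)
        (fun j _ hj => hg j (fun h => hj ((hmem j).mpr h)))
    rw [← e1, Finset.sum_map]
    rfl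
  -- key conjugation identity
  have hVfcol : ∀ i : Fin q, ∀ k : Fin n, Vf k (Fin.castLE hqn i) = Vq k i := by
    intro i k
    have hmem' : (Fin.castLE hqn i : Fin n) ∈ s := by
      show ((Fin.castLE hqn i : Fin n) : ℕ) < q
      simpa using i.isLt
    have := hb _ hmem'
    rw [hVfdef]
    show b (Fin.castLE hqn i) k = Vq k i
    rw [this, hvdef]
    have hlt : ((Fin.castLE hqn i : Fin n) : ℕ) < q := by simpa using i.isLt
    simp only [dif_pos hlt]
    show Vq k ⟨(Fin.castLE hqn i : Fin n), hlt⟩ = Vq k i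
    rw [show (⟨((Fin.castLE hqn i : Fin n) : ℕ), hlt⟩ : Fin q) = i from by ext; simp]
  have key : Xᴴ * X = Vf * Matrix.diagonal d * Vfᵀ := by
    rw [hXtX]
    ext a c
    have lhs : (Vq * Matrix.diagonal (fun i => σ i ^ 2) * Vqᵀ) a c
        = ∑ i, Vq a i * σ i ^ 2 * Vq c i := by
      rw [Matrix.mul_apply]
      simp [Matrix.mul_diagonal, Matrix.transpose_apply]
    have rhs : (Vf * Matrix.diagonal d * Vfᵀ) a c = ∑ j, Vf a j * d j * Vf c j := by
      rw [Matrix.mul_apply]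
      simp [Matrix.mul_diagonal, Matrix.transpose_apply]
    rw [lhs, rhs]
    rw [hsum (fun j => Vf a j * d j * Vf c j)
      (fun j hj => by simp [hddef, dif_neg hj])]
    refine (Finset.sum_congr rfl fun i _ => ?_).symm
    have hlt : ((Fin.castLE hqn i : Fin n) : ℕ) < q := by simpa using i.isLt
    rw [hVfcol, hVfcol, hddef]
    simp only [dif_pos hlt]
    rw [show (⟨((Fin.castLE hqn i : Fin n) : ℕ), hlt⟩ : Fin q) = i from by ext; simp]
  -- conclude
  rw [eig_sum_of_conj (Matrix.isHermitian_conjTranspose_mul_self X) d Vf hVfo2 key Real.sqrt]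
  rw [hsum (fun j => Real.sqrt (d j)) (fun j hj => by simp [hddef, dif_neg hj])]
  refine Finset.sum_congr rfl fun i _ => ?_
  have hlt : ((Fin.castLE hqn i : Fin n) : ℕ) < q := by simpa using i.isLt
  rw [hddef]
  simp only [dif_pos hlt]
  rw [show (⟨((Fin.castLE hqn i : Fin n) : ℕ), hlt⟩ : Fin q) = i by ext; simp]
  exact Real.sqrt_sq (le_of_lt (hσ i))

/-- Subgradients of the nuclear norm: if `X = U_q S_q V_qᵀ` is a compact SVD (with
`σᵢ > 0` on the diagonal and `U_q`, `V_q` having orthonormal columns), then for any `Y`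
with `U_qᵀ Y = 0`, `Y V_q = 0` and operator norm `‖Y‖ = σ₁(Y) ≤ 1`, the matrix
`U_q V_qᵀ + Y` is a subgradient of `‖·‖_∗` at `X`. -/
theorem stmt_16 {m n q : ℕ} (X : Matrix (Fin m) (Fin n) ℝ)
    (Uq : Matrix (Fin m) (Fin q) ℝ) (Vq : Matrix (Fin n) (Fin q) ℝ)
    (σ : Fin q → ℝ) (hσ : ∀ i, 0 < σ i)
    (hUq : Uqᵀ * Uq = 1) (hVq : Vqᵀ * Vq = 1)
    (hX : X = Uq * Matrix.diagonal σ * Vqᵀ)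
    (Y : Matrix (Fin m) (Fin n) ℝ)
    (hYU : Uqᵀ * Y = 0) (hYV : Y * Vq = 0) (hYnorm : svals Y 0 ≤ 1) :
    ∀ Z : Matrix (Fin m) (Fin n) ℝ,
      (∑ i ∈ Finset.range n, svals Z i) ≥
        (∑ i ∈ Finset.range n, svals X i) +
          ((Uq * Vqᵀ + Y)ᵀ * (Z - X)).trace := by
  intro Z
  classical
  set G : Matrix (Fin m) (Fin n) ℝ := Uq * Vqᵀ + Y with hGdef
  -- operator norm of G is at most 1
  have hYe : ∀ x : Fin n → ℝ, x ⬝ᵥ ((Yᵀ * Y) *ᵥ x) ≤ 1 * (x ⬝ᵥ x) := by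
    intro x
    have hH := Matrix.isHermitian_conjTranspose_mul_self Y
    have hle : ∀ j, hH.eigenvalues j ≤ 1 := by
      intro j
      have h0 := Matrix.eigenvalues_conjTranspose_mul_self_nonneg Y j
      have h1 : Real.sqrt (hH.eigenvalues j) ≤ 1 := le_trans (svals_zero_max Y j) hYnorm
      nlinarith [Real.sq_sqrt h0, Real.sqrt_nonneg (hH.eigenvalues j)]
    have h := quadform_le hH 1 hle x
    rwa [Matrix.conjTranspose_eq_transpose_of_trivial] at h
  have hGx : ∀ x : Fin n → ℝ, (G *ᵥ x) ⬝ᵥ (G *ᵥ x) ≤ x ⬝ᵥ x :=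
    opnorm_bound Uq Vq hUq hVq Y hYU hYV hYe
  -- spectral data of Zᴴ Z
  have hHZ := Matrix.isHermitian_conjTranspose_mul_self Z
  set W : Matrix (Fin n) (Fin n) ℝ := (hHZ.eigenvectorUnitary : Matrix (Fin n) (Fin n) ℝ)
    with hWdef
  have hstar : star W = Wᵀ := by
    rw [Matrix.star_eq_conjTranspose, Matrix.conjTranspose_eq_transpose_of_trivial]
  have hWWt : W * Wᵀ = 1 := by
    rw [← hstar]
    exact Matrix.mem_unitaryGroup_iff.mp hHZ.eigenvectorUnitary.2
  have hWtW : Wᵀ * W = 1 := mul_eq_one_comm.mp hWWt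
  set v : Fin n → (Fin n → ℝ) := fun j => fun k => W k j with hvdef
  have hvv : ∀ j, v j ⬝ᵥ v j = 1 := by
    intro j
    have h := congrFun (congrFun hWtW j) j
    rw [Matrix.mul_apply, Matrix.one_apply_eq] at h
    rw [← h]
    exact Finset.sum_congr rfl fun k _ => rfl
  have hvb : ∀ j, v j = ⇑(hHZ.eigenvectorBasis j) := by
    intro j
    funext k
    exact hHZ.eigenvectorUnitary_apply k j
  have hZv : ∀ j, (Z *ᵥ v j) ⬝ᵥ (Z *ᵥ v j) = hHZ.eigenvalues j := by
    intro j
    rw [dot_mulVec_mulVec]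
    have hm : (Zᵀ * Z) *ᵥ (v j) = hHZ.eigenvalues j • v j := by
      have h := hHZ.mulVec_eigenvectorBasis j
      rw [← hvb j] at h
      rw [show Zᵀ = Zᴴ from (Matrix.conjTranspose_eq_transpose_of_trivial Z).symm]
      exact h
    rw [hm, dotProduct_smul, smul_eq_mul, hvv, mul_one]
  have heignn : ∀ j, 0 ≤ hHZ.eigenvalues j := fun j =>
    Matrix.eigenvalues_conjTranspose_mul_self_nonneg Z j
  -- per-column bound
  have hperj : ∀ j, (G *ᵥ v j) ⬝ᵥ (Z *ᵥ v j) ≤ Real.sqrt (hHZ.eigenvalues j) := by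
    intro j
    set t : ℝ := (G *ᵥ v j) ⬝ᵥ (Z *ᵥ v j) with htdef
    have hcs : t ^ 2 ≤ ((G *ᵥ v j) ⬝ᵥ (G *ᵥ v j)) * ((Z *ᵥ v j) ⬝ᵥ (Z *ᵥ v j)) := by
      have cs := Finset.sum_mul_sq_le_sq_mul_sq Finset.univ (G *ᵥ v j) (Z *ᵥ v j)
      have e1 : (G *ᵥ v j) ⬝ᵥ (G *ᵥ v j) = ∑ i, (G *ᵥ v j) i ^ 2 :=
        Finset.sum_congr rfl fun i _ => (pow_two _).symm
      have e2 : (Z *ᵥ v j) ⬝ᵥ (Z *ᵥ v j) = ∑ i, (Z *ᵥ v j) i ^ 2 :=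
        Finset.sum_congr rfl fun i _ => (pow_two _).symm
      rw [e1, e2]
      exact cs
    have hG1 : (G *ᵥ v j) ⬝ᵥ (G *ᵥ v j) ≤ 1 := by
      have := hGx (v j)
      rwa [hvv] at this
    have ht2 : t ^ 2 ≤ hHZ.eigenvalues j := by
      rw [hZv j] at hcs
      have hGnn : 0 ≤ (G *ᵥ v j) ⬝ᵥ (G *ᵥ v j) :=
        Finset.sum_nonneg fun i _ => mul_self_nonneg _
      nlinarith [heignn j]
    calc t ≤ |t| := le_abs_self t
      _ ≤ Real.sqrt (hHZ.eigenvalues j) := by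
          rw [Real.le_sqrt (abs_nonneg t) (heignn j), sq_abs]
          exact ht2
  -- trace inequality for Z
  have hsumZ : ∑ i ∈ Finset.range n, svals Z i = ∑ j, Real.sqrt (hHZ.eigenvalues j) := by
    have h := sum_svals Z
    rwa [Fintype.card_fin] at h
  have htrZ : (Gᵀ * Z).trace ≤ ∑ i ∈ Finset.range n, svals Z i := by
    rw [trace_eq_sum_cols G Z W hWWt, hsumZ]
    exact Finset.sum_le_sum fun j _ => hperj j
  -- trace equality for X
  have hYtU : Yᵀ * Uq = 0 := by
    have h := congrArg Matrix.transpose hYU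
    rwa [Matrix.transpose_mul, Matrix.transpose_transpose, Matrix.transpose_zero] at h
  have htrX : (Gᵀ * X).trace = ∑ i, σ i := by
    rw [hGdef, hX, Matrix.transpose_add, Matrix.transpose_mul, Matrix.transpose_transpose,
      Matrix.add_mul]
    have hsecond : Yᵀ * (Uq * Matrix.diagonal σ * Vqᵀ) = 0 := by
      simp only [← Matrix.mul_assoc]
      rw [hYtU, Matrix.zero_mul, Matrix.zero_mul]
    have hfirst : Vq * Uqᵀ * (Uq * Matrix.diagonal σ * Vqᵀ) = Vq * (Matrix.diagonal σ * Vqᵀ) := by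
      simp only [Matrix.mul_assoc]
      rw [← Matrix.mul_assoc Uqᵀ Uq, hUq, Matrix.one_mul]
    rw [hsecond, hfirst, add_zero, Matrix.trace_mul_comm, Matrix.mul_assoc,
      Matrix.trace_mul_comm, hVq, Matrix.one_mul, Matrix.trace_diagonal]
  -- sum of svals of X
  have hsumX : ∑ i ∈ Finset.range n, svals X i = ∑ i, σ i := by
    have h := sum_svals X
    rw [Fintype.card_fin] at h
    rw [h]
    exact sum_svals_X X Uq Vq σ hσ hUq hVq hX
  -- conclude
  rw [ge_iff_le, Matrix.mul_sub, Matrix.trace_sub, hsumX, htrX]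
  linarith
end
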